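/- arXiv:2409.20521 — 7 statements merged into one kernel-verified Lean document; each statement's English description precedes it below -/
import Mathlib

section
/- Let S be a measurable space in which all singleton sets are measurable, μ⁰ a probability measure on S, ρ ∈ [0,1], H > 0, and V : S → ℝ a measurable function with 0 ≤ V(s) ≤ H for all s and V(s_f) = 0 for some s_f ∈ S. Then the worst-case expectation over the TV uncertainty set satisfies inf_{μ ∈ 𝒰^ρ(μ⁰)} ∫ V dμ = sup_{α ∈ [0,H]} ( ∫ [V]_α dμ⁰ − ρ·α ), and the supremum on the right-hand side is attained. -/
open MeasureTheory

/-- The TV uncertainty set around a probability measure `μ0` at level `ρ`: all probability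
measures `μ` with `D_TV(μ, μ0) = sup_A |μ(A) − μ0(A)| ≤ ρ`. -/
def tvUncertaintySet {S : Type*} [MeasurableSpace S] (μ0 : Measure S) (ρ : ℝ) :
    Set (Measure S) :=
  {μ | IsProbabilityMeasure μ ∧
    ∀ A : Set S, MeasurableSet A → |(μ A).toReal - (μ0 A).toReal| ≤ ρ}

private lemma integrable_of_bounds {S : Type*} [MeasurableSpace S] (μ : Measure S)
    [IsFiniteMeasure μ] {g : S → ℝ} (hg : Measurable g) {K : ℝ}
    (h0 : ∀ s, 0 ≤ g s) (hK : ∀ s, g s ≤ K) : Integrable g μ := by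
  refine Integrable.mono' (integrable_const K) hg.aestronglyMeasurable ?_
  exact ae_of_all _ fun s => by
    rw [Real.norm_eq_abs, abs_of_nonneg (h0 s)]; exact hK s

private lemma layer_int {S : Type*} [MeasurableSpace S] (ν : Measure S)
    [IsProbabilityMeasure ν] {g : S → ℝ} {α : ℝ}
    (hgα : ∀ s, g s ≤ α) :
    IntegrableOn (fun t : ℝ => (ν {a | t < g a}).toReal) (Set.Ioi 0) volume := by
  have hanti : Antitone fun t : ℝ => (ν {a | t < g a}).toReal := fun x y hxy =>
    ENNReal.toReal_mono (measure_ne_top _ _)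
      (measure_mono fun s hs => lt_of_le_of_lt hxy hs)
  have hind : IntegrableOn (Set.indicator (Set.Ioc (0:ℝ) α) fun _ => (1:ℝ))
      (Set.Ioi 0) volume := by
    rw [IntegrableOn, integrable_indicator_iff measurableSet_Ioc]
    exact integrableOn_const (lt_of_le_of_lt (Measure.restrict_apply_le _ _)
      measure_Ioc_lt_top).ne
  refine Integrable.mono' hind hanti.measurable.aestronglyMeasurable ?_
  refine (ae_restrict_iff' measurableSet_Ioi).2 (ae_of_all _ fun t ht => ?_)
  rw [Real.norm_eq_abs, abs_of_nonneg ENNReal.toReal_nonneg]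
  by_cases htα : t ≤ α
  · rw [Set.indicator_of_mem (Set.mem_Ioc.2 ⟨Set.mem_Ioi.1 ht, htα⟩)]
    have : ν {a | t < g a} ≤ 1 := prob_le_one
    simpa using ENNReal.toReal_mono ENNReal.one_ne_top this
  · have hempty : {a | t < g a} = ∅ := by
      ext s; simp only [Set.mem_setOf_eq, Set.mem_empty_iff_false, iff_false, not_lt]
      exact le_trans (hgα s) (le_of_not_ge htα)
    rw [hempty]
    simp [Set.indicator_nonneg (fun _ _ => (zero_le_one : (0:ℝ) ≤ 1)) t]

private lemma tv_weak_duality {S : Type*} [MeasurableSpace S] (μ0 μ : Measure S)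
    [IsProbabilityMeasure μ0] [IsProbabilityMeasure μ] {ρ α : ℝ}
    (hρ : 0 ≤ ρ) (hα : 0 ≤ α) {g : S → ℝ} (hg : Measurable g)
    (h0 : ∀ s, 0 ≤ g s) (hgα : ∀ s, g s ≤ α)
    (htv : ∀ A : Set S, MeasurableSet A → (μ0 A).toReal - (μ A).toReal ≤ ρ) :
    ∫ s, g s ∂μ0 ≤ (∫ s, g s ∂μ) + ρ * α := by
  have hint0 : Integrable g μ0 := integrable_of_bounds μ0 hg h0 hgα
  have hintμ : Integrable g μ := integrable_of_bounds μ hg h0 hgα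
  rw [hint0.integral_eq_integral_meas_lt (ae_of_all _ h0),
      hintμ.integral_eq_integral_meas_lt (ae_of_all _ h0)]
  have I0 := layer_int μ0 hgα
  have Iμ := layer_int μ hgα
  have hindint : IntegrableOn (Set.indicator (Set.Ioc (0:ℝ) α) fun _ => (1:ℝ))
      (Set.Ioi 0) volume := by
    rw [IntegrableOn, integrable_indicator_iff measurableSet_Ioc]
    exact integrableOn_const (lt_of_le_of_lt (Measure.restrict_apply_le _ _)
      measure_Ioc_lt_top).ne
  have Iind : IntegrableOn
      (fun t => ρ * Set.indicator (Set.Ioc (0:ℝ) α) (fun _ => (1:ℝ)) t)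
      (Set.Ioi 0) volume := hindint.const_mul ρ
  have hpt : ∀ t ∈ Set.Ioi (0:ℝ), (μ0 {a | t < g a}).toReal ≤
      (μ {a | t < g a}).toReal + ρ * Set.indicator (Set.Ioc (0:ℝ) α) (fun _ => (1:ℝ)) t := by
    intro t ht
    by_cases htα : t ≤ α
    · rw [Set.indicator_of_mem (Set.mem_Ioc.2 ⟨Set.mem_Ioi.1 ht, htα⟩)]
      have hmeas : MeasurableSet {a | t < g a} := measurableSet_lt measurable_const hg
      have := htv _ hmeas
      linarith
    · have hempty : {a | t < g a} = ∅ := by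
        ext s; simp only [Set.mem_setOf_eq, Set.mem_empty_iff_false, iff_false, not_lt]
        exact le_trans (hgα s) (le_of_not_ge htα)
      rw [hempty]
      have h1 : (0:ℝ) ≤ Set.indicator (Set.Ioc (0:ℝ) α) (fun _ => (1:ℝ)) t :=
        Set.indicator_nonneg (fun _ _ => zero_le_one) t
      have h2 : (0:ℝ) ≤ (μ ∅).toReal := ENNReal.toReal_nonneg
      simp only [measure_empty, ENNReal.toReal_zero]
      nlinarith
  have hmono := integral_mono_ae I0 (Iμ.add Iind)
    ((ae_restrict_iff' measurableSet_Ioi).2 (ae_of_all _ hpt))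
  have hindval : ∫ t in Set.Ioi (0:ℝ),
      Set.indicator (Set.Ioc (0:ℝ) α) (fun _ => (1:ℝ)) t = α := by
    rw [integral_indicator measurableSet_Ioc, Measure.restrict_restrict measurableSet_Ioc,
      Set.inter_eq_self_of_subset_left Set.Ioc_subset_Ioi_self, setIntegral_const]
    simp [Real.volume_Ioc, ENNReal.toReal_ofReal hα, hα]
  simp only [Pi.add_apply] at hmono
  rw [integral_add Iμ Iind, integral_const_mul ρ, hindval] at hmono
  exact hmono


set_option maxHeartbeats 1000000 in
/-- Dual formulation under the fail-state assumption (the paper's Proposition 3.3).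
Let `S` be a measurable space with measurable singletons, `μ0` a probability measure,
`ρ ∈ [0,1]`, `H > 0`, and `V : S → ℝ` measurable with `0 ≤ V ≤ H` and `V(s_f) = 0` for
some `s_f`. Then `inf_{μ ∈ 𝒰^ρ(μ0)} ∫ V dμ = sup_{α ∈ [0,H]} (∫ [V]_α dμ0 − ρ·α)`, and
the supremum on the right-hand side is attained. -/
theorem tv_duality_fail_state {S : Type*} [MeasurableSpace S] [MeasurableSingletonClass S]
    (μ0 : Measure S) [IsProbabilityMeasure μ0]
    (ρ : ℝ) (hρ : ρ ∈ Set.Icc (0 : ℝ) 1) (H : ℝ) (hH : 0 < H)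
    (V : S → ℝ) (hV : Measurable V) (hV0 : ∀ s, 0 ≤ V s) (hVH : ∀ s, V s ≤ H)
    (s_f : S) (hsf : V s_f = 0) :
    ∃ α ∈ Set.Icc (0 : ℝ) H,
      ((∫ s, min (V s) α ∂μ0) - ρ * α =
        sInf {x : ℝ | ∃ μ ∈ tvUncertaintySet μ0 ρ, x = ∫ s, V s ∂μ}) ∧
      ∀ α' ∈ Set.Icc (0 : ℝ) H,
        (∫ s, min (V s) α' ∂μ0) - ρ * α' ≤ (∫ s, min (V s) α ∂μ0) - ρ * α := by
  obtain ⟨hρ0, hρ1⟩ := hρ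
  classical
  set F : ℝ → ℝ := fun β => (μ0 {s | β < V s}).toReal with hFdef
  have hFanti : Antitone F := fun x y hxy =>
    ENNReal.toReal_mono (measure_ne_top _ _)
      (measure_mono fun s hs => lt_of_le_of_lt hxy hs)
  set T : Set ℝ := {β : ℝ | 0 ≤ β ∧ F β ≤ ρ} with hTdef
  have hmemH : H ∈ T := by
    refine ⟨hH.le, ?_⟩
    have hempty : {s | H < V s} = ∅ := by
      ext s; simp only [Set.mem_setOf_eq, Set.mem_empty_iff_false, iff_false, not_lt]
      exact hVH s
    simp only [hFdef, hempty, measure_empty, ENNReal.toReal_zero]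
    exact hρ0
  have hTne : T.Nonempty := ⟨H, hmemH⟩
  have hTbdd : BddBelow T := ⟨0, fun x hx => hx.1⟩
  set αs := sInf T with hαsdef
  have hαs0 : 0 ≤ αs := le_csInf hTne fun x hx => hx.1
  have hαsH : αs ≤ H := csInf_le hTbdd hmemH
  -- F αs ≤ ρ (right continuity)
  have hFαs : F αs ≤ ρ := by
    have hstep : ∀ n : ℕ, F (αs + 1 / (n + 1)) ≤ ρ := by
      intro n
      have hpos : (0:ℝ) < 1 / (n + 1) := by positivity
      obtain ⟨β, hβT, hβlt⟩ := exists_lt_of_csInf_lt hTne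
        (show sInf T < αs + 1 / (n + 1) by rw [← hαsdef]; linarith)
      exact le_trans (hFanti hβlt.le) hβT.2
    have hU : {s | αs < V s} = ⋃ n : ℕ, {s | αs + 1 / (n + 1) < V s} := by
      ext s
      simp only [Set.mem_setOf_eq, Set.mem_iUnion]
      constructor
      · intro h
        obtain ⟨n, hn⟩ := exists_nat_one_div_lt (sub_pos.2 h)
        exact ⟨n, by linarith⟩
      · rintro ⟨n, hn⟩
        have : (0:ℝ) < 1 / (n + 1) := by positivity
        linarith
    have hmono : Monotone fun n : ℕ => {s | αs + 1 / ((n:ℝ) + 1) < V s} := by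
      intro n m hnm s hs
      simp only [Set.mem_setOf_eq] at hs ⊢
      have h1 : (1:ℝ) / ((m:ℝ) + 1) ≤ 1 / ((n:ℝ) + 1) := by
        apply one_div_le_one_div_of_le (by positivity)
        have : (n:ℝ) ≤ (m:ℝ) := Nat.cast_le.2 hnm
        linarith
      linarith
    have hμU : μ0 {s | αs < V s} = ⨆ n : ℕ, μ0 {s | αs + 1 / ((n:ℝ) + 1) < V s} := by
      rw [hU]
      exact Directed.measure_iUnion hmono.directed_le
    have hle : μ0 {s | αs < V s} ≤ ENNReal.ofReal ρ := by
      rw [hμU]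
      exact iSup_le fun n =>
        (ENNReal.le_ofReal_iff_toReal_le (measure_ne_top _ _) hρ0).2 (hstep n)
    calc F αs ≤ (ENNReal.ofReal ρ).toReal :=
          ENNReal.toReal_mono ENNReal.ofReal_ne_top hle
      _ = ρ := ENNReal.toReal_ofReal hρ0
  -- ρ ≤ μ0 {αs ≤ V}
  have hρae : ρ ≤ (μ0 {s | αs ≤ V s}).toReal := by
    rcases eq_or_lt_of_le hαs0 with h0 | hposαs
    · have huniv : {s | αs ≤ V s} = Set.univ := by
        ext s; simp only [Set.mem_setOf_eq, Set.mem_univ, iff_true]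
        rw [← h0]; exact hV0 s
      rw [huniv]
      simp only [measure_univ, ENNReal.toReal_one]
      exact hρ1
    · have hβ : ∀ n : ℕ, ρ < F (αs - αs / (n + 1)) := by
        intro n
        have hd : (0:ℝ) < αs / (n + 1) := by positivity
        have h1 : 0 ≤ αs - αs / (n + 1) := by
          have : αs / ((n:ℝ) + 1) ≤ αs := by
            apply div_le_self hαs0
            have : (0:ℝ) ≤ (n:ℝ) := Nat.cast_nonneg n
            linarith
          linarith
        by_contra hcon
        push_neg at hcon
        have := csInf_le hTbdd (show αs - αs / (n + 1) ∈ T from ⟨h1, hcon⟩)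
        rw [← hαsdef] at this
        linarith
      have hI : {s | αs ≤ V s} = ⋂ n : ℕ, {s | αs - αs / ((n:ℝ) + 1) < V s} := by
        ext s
        simp only [Set.mem_setOf_eq, Set.mem_iInter]
        constructor
        · intro h n
          have : (0:ℝ) < αs / ((n:ℝ) + 1) := by positivity
          linarith
        · intro h
          have htend : Filter.Tendsto (fun n : ℕ => αs - αs / ((n:ℝ) + 1))
              Filter.atTop (nhds αs) := by
            have h1 : Filter.Tendsto (fun n : ℕ => αs / ((n:ℝ) + 1))
                Filter.atTop (nhds 0) := by
              simpa [div_eq_mul_inv] using tendsto_one_div_add_atTop_nhds_zero_nat.const_mul αs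
            simpa using (tendsto_const_nhds (x := αs)).sub h1
          exact le_of_tendsto htend (Filter.Eventually.of_forall fun n => (h n).le)
      have hanti' : Antitone fun n : ℕ => {s | αs - αs / ((n:ℝ) + 1) < V s} := by
        intro n m hnm s hs
        simp only [Set.mem_setOf_eq] at hs ⊢
        have h1 : αs / ((m:ℝ) + 1) ≤ αs / ((n:ℝ) + 1) := by
          have hc : (n:ℝ) ≤ (m:ℝ) := Nat.cast_le.2 hnm
          gcongr
        linarith
      have hμI : μ0 {s | αs ≤ V s} = ⨅ n : ℕ, μ0 {s | αs - αs / ((n:ℝ) + 1) < V s} := by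
        rw [hI]
        exact Directed.measure_iInter
          (fun n => (measurableSet_lt measurable_const hV).nullMeasurableSet)
          hanti'.directed_ge ⟨0, measure_ne_top _ _⟩
      have hge : ENNReal.ofReal ρ ≤ μ0 {s | αs ≤ V s} := by
        rw [hμI]
        refine le_iInf fun n => ?_
        exact ENNReal.ofReal_le_of_le_toReal (hβ n).le
      calc ρ = (ENNReal.ofReal ρ).toReal := (ENNReal.toReal_ofReal hρ0).symm
        _ ≤ (μ0 {s | αs ≤ V s}).toReal :=
          ENNReal.toReal_mono (measure_ne_top _ _) hge
  -- sets and constants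
  set A : Set S := {s | αs < V s} with hAdef
  set E : Set S := {s | V s = αs} with hEdef
  set C : Set S := {s | V s < αs} with hCdef
  have hAm : MeasurableSet A := measurableSet_lt measurable_const hV
  have hEm : MeasurableSet E := hV (measurableSet_singleton αs)
  have hCm : MeasurableSet C := measurableSet_lt hV measurable_const
  set a := (μ0 A).toReal with hadef
  set e := (μ0 E).toReal with hedef
  have hAE : {s | αs ≤ V s} = A ∪ E := by
    ext s
    simp only [Set.mem_setOf_eq, Set.mem_union, hAdef, hEdef]
    rw [le_iff_lt_or_eq]
    constructor
    · rintro (h | h); exacts [Or.inl h, Or.inr h.symm]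
    · rintro (h | h); exacts [Or.inl h, Or.inr h.symm]
  have hdisjAE : Disjoint A E := by
    rw [Set.disjoint_left]
    intro s hs hs'
    simp only [hAdef, hEdef, Set.mem_setOf_eq] at hs hs'
    exact absurd hs' (ne_of_gt hs)
  have haee : (μ0 {s | αs ≤ V s}).toReal = a + e := by
    rw [hAE, measure_union hdisjAE hEm,
      ENNReal.toReal_add (measure_ne_top _ _) (measure_ne_top _ _)]
  have ha : a ≤ ρ := hFαs
  have haeρ : ρ ≤ a + e := haee ▸ hρae
  have he0 : (0:ℝ) ≤ e := ENNReal.toReal_nonneg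
  have ha0 : (0:ℝ) ≤ a := ENNReal.toReal_nonneg
  set c : ℝ := if e = 0 then 0 else (ρ - a) / e with hcdef
  have hc0 : 0 ≤ c := by
    rw [hcdef]
    split_ifs with h
    · exact le_refl 0
    · exact div_nonneg (by linarith) (lt_of_le_of_ne he0 (Ne.symm h)).le
  have hc1 : c ≤ 1 := by
    rw [hcdef]
    split_ifs with h
    · exact zero_le_one
    · rw [div_le_one (lt_of_le_of_ne he0 (Ne.symm h))]
      linarith
  have hkey : a + c * e = ρ := by
    rw [hcdef]
    split_ifs with h
    · rw [h] at haeρ ⊢; linarith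
    · rw [div_mul_cancel₀ _ h]; ring
  -- the worst-case measure
  set μstar : Measure S := μ0.restrict C + ENNReal.ofReal (1 - c) • μ0.restrict E
      + ENNReal.ofReal ρ • Measure.dirac s_f with hμstardef
  have happly : ∀ B : Set S, MeasurableSet B → (μstar B).toReal =
      (μ0 (B ∩ C)).toReal + (1 - c) * (μ0 (B ∩ E)).toReal
        + ρ * (if s_f ∈ B then 1 else 0) := by
    intro B hB
    have h1 : μstar B = μ0 (B ∩ C) + ENNReal.ofReal (1 - c) * μ0 (B ∩ E)
        + ENNReal.ofReal ρ * (if s_f ∈ B then 1 else 0) := by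
      rw [hμstardef]
      rw [Measure.add_apply, Measure.add_apply, Measure.smul_apply, Measure.smul_apply,
        smul_eq_mul, smul_eq_mul, Measure.restrict_apply hB, Measure.restrict_apply hB,
        Measure.dirac_apply' _ hB, Set.indicator_apply]
      simp only [Pi.one_apply]
    rw [h1]
    have hne1 : μ0 (B ∩ C) ≠ ⊤ := measure_ne_top _ _
    have hne2 : ENNReal.ofReal (1 - c) * μ0 (B ∩ E) ≠ ⊤ :=
      ENNReal.mul_ne_top ENNReal.ofReal_ne_top (measure_ne_top _ _)
    have hne3 : ENNReal.ofReal ρ * (if s_f ∈ B then (1:ENNReal) else 0) ≠ ⊤ := by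
      split_ifs <;> simp [ENNReal.mul_ne_top, ENNReal.ofReal_ne_top]
    rw [ENNReal.toReal_add (ENNReal.add_ne_top.2 ⟨hne1, hne2⟩) hne3,
      ENNReal.toReal_add hne1 hne2, ENNReal.toReal_mul, ENNReal.toReal_mul,
      ENNReal.toReal_ofReal (by linarith : (0:ℝ) ≤ 1 - c), ENNReal.toReal_ofReal hρ0]
    congr 1
    split_ifs <;> simp
  have hCc : Cᶜ = {s | αs ≤ V s} := by
    ext s; simp only [hCdef, Set.mem_compl_iff, Set.mem_setOf_eq, not_lt]
  have hCval : (μ0 C).toReal = 1 - (a + e) := by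
    have h1 : μ0 C + μ0 Cᶜ = 1 := by
      rw [measure_add_measure_compl hCm, measure_univ]
    have h2 : (μ0 C).toReal + (μ0 Cᶜ).toReal = 1 := by
      rw [← ENNReal.toReal_add (measure_ne_top _ _) (measure_ne_top _ _), h1,
        ENNReal.toReal_one]
    rw [hCc, haee] at h2
    linarith
  have hμstar_univ : (μstar Set.univ).toReal = 1 := by
    have := happly Set.univ MeasurableSet.univ
    simp only [Set.univ_inter, Set.mem_univ, if_pos] at this
    rw [this, hCval]
    linarith
  have hμstar_fin : μstar Set.univ ≠ ⊤ := by
    rw [hμstardef]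
    simp only [Measure.add_apply, Measure.smul_apply, smul_eq_mul]
    refine ENNReal.add_ne_top.2 ⟨ENNReal.add_ne_top.2 ⟨measure_ne_top _ _, ?_⟩, ?_⟩
    · exact ENNReal.mul_ne_top ENNReal.ofReal_ne_top (measure_ne_top _ _)
    · exact ENNReal.mul_ne_top ENNReal.ofReal_ne_top (measure_ne_top _ _)
  have hprob : IsProbabilityMeasure μstar := by
    constructor
    exact (ENNReal.toReal_eq_toReal_iff' hμstar_fin ENNReal.one_ne_top).1
      (by rw [hμstar_univ, ENNReal.toReal_one])
  haveI := hprob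
  -- value of the worst-case measure
  have hIE : ∫ s in E, V s ∂μ0 = e * αs := by
    rw [setIntegral_congr_fun hEm (fun s hs => hs : Set.EqOn V (fun _ => αs) E),
      setIntegral_const, measureReal_def, smul_eq_mul]
  have hVintC : Integrable V (μ0.restrict C) := integrable_of_bounds _ hV hV0 hVH
  have hVintE : Integrable V (ENNReal.ofReal (1 - c) • μ0.restrict E) :=
    (integrable_of_bounds _ hV hV0 hVH).smul_measure ENNReal.ofReal_ne_top
  have hVintD : Integrable V (ENNReal.ofReal ρ • Measure.dirac s_f) :=
    (integrable_of_bounds _ hV hV0 hVH).smul_measure ENNReal.ofReal_ne_top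
  have hVμstar : ∫ s, V s ∂μstar = (∫ s in C, V s ∂μ0) + (1 - c) * (e * αs) := by
    rw [hμstardef, integral_add_measure (hVintC.add_measure hVintE) hVintD,
      integral_add_measure hVintC hVintE, integral_smul_measure, integral_smul_measure,
      integral_dirac, hsf, hIE, ENNReal.toReal_ofReal (by linarith : (0:ℝ) ≤ 1 - c),
      ENNReal.toReal_ofReal hρ0]
    simp only [smul_eq_mul]
    ring
  have hminintαs : Integrable (fun s => min (V s) αs) μ0 :=
    integrable_of_bounds μ0 (hV.min measurable_const)
      (fun s => le_min (hV0 s) hαs0) (fun s => le_trans (min_le_left _ _) (hVH s))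
  have hsplit : ∫ s, min (V s) αs ∂μ0 = (∫ s in C, V s ∂μ0) + (a + e) * αs := by
    rw [← integral_add_compl hCm hminintαs]
    congr 1
    · exact setIntegral_congr_fun hCm fun s hs => min_eq_left (le_of_lt hs)
    · rw [hCc,
        setIntegral_congr_fun (hAE ▸ (hAm.union hEm)) ?eq,
        setIntegral_const, measureReal_def, haee, smul_eq_mul]
      case eq =>
        intro s hs
        exact min_eq_right hs
  have hval : ∫ s, V s ∂μstar = (∫ s, min (V s) αs ∂μ0) - ρ * αs := by
    rw [hVμstar, hsplit]
    linear_combination (-αs) * hkey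
  -- the TV bound for μstar
  have hTV : ∀ B : Set S, MeasurableSet B →
      |(μstar B).toReal - (μ0 B).toReal| ≤ ρ := by
    intro B hB
    have hdec : (μ0 B).toReal = (μ0 (B ∩ C)).toReal + (μ0 (B ∩ A)).toReal
        + (μ0 (B ∩ E)).toReal := by
      have h1 : μ0 (B ∩ C) + μ0 (B \ C) = μ0 B := measure_inter_add_diff B hCm
      have h2 : B \ C = (B ∩ A) ∪ (B ∩ E) := by
        ext s
        simp only [Set.mem_diff, Set.mem_inter_iff, Set.mem_union, hCdef, hAdef, hEdef,
          Set.mem_setOf_eq, not_lt]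
        constructor
        · rintro ⟨hsB, hle⟩
          rcases lt_or_eq_of_le hle with h | h
          exacts [Or.inl ⟨hsB, h⟩, Or.inr ⟨hsB, h.symm⟩]
        · rintro (⟨hsB, h⟩ | ⟨hsB, h⟩)
          exacts [⟨hsB, h.le⟩, ⟨hsB, h.ge⟩]
      have hdisj2 : Disjoint (B ∩ A) (B ∩ E) :=
        hdisjAE.mono Set.inter_subset_right Set.inter_subset_right
      rw [h2, measure_union hdisj2 (hB.inter hEm)] at h1
      rw [← h1, ENNReal.toReal_add (measure_ne_top _ _) (ENNReal.add_ne_top.2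
        ⟨measure_ne_top _ _, measure_ne_top _ _⟩),
        ENNReal.toReal_add (measure_ne_top _ _) (measure_ne_top _ _)]
      ring
    rw [happly B hB, hdec]
    have haB : (μ0 (B ∩ A)).toReal ≤ a :=
      ENNReal.toReal_mono (measure_ne_top _ _) (measure_mono Set.inter_subset_right)
    have heB : (μ0 (B ∩ E)).toReal ≤ e :=
      ENNReal.toReal_mono (measure_ne_top _ _) (measure_mono Set.inter_subset_right)
    have haB0 : (0:ℝ) ≤ (μ0 (B ∩ A)).toReal := ENNReal.toReal_nonneg
    have heB0 : (0:ℝ) ≤ (μ0 (B ∩ E)).toReal := ENNReal.toReal_nonneg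
    have hceB : c * (μ0 (B ∩ E)).toReal ≤ c * e := mul_le_mul_of_nonneg_left heB hc0
    have hceB0 : (0:ℝ) ≤ c * (μ0 (B ∩ E)).toReal := mul_nonneg hc0 heB0
    have harith : (μ0 (B ∩ C)).toReal + (1 - c) * (μ0 (B ∩ E)).toReal
        + ρ * (if s_f ∈ B then (1:ℝ) else 0)
        - ((μ0 (B ∩ C)).toReal + (μ0 (B ∩ A)).toReal + (μ0 (B ∩ E)).toReal)
        = ρ * (if s_f ∈ B then (1:ℝ) else 0) - (μ0 (B ∩ A)).toReal
          - c * (μ0 (B ∩ E)).toReal := by ring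
    rw [harith, abs_le]
    constructor <;> split_ifs <;>
      simp only [mul_one, mul_zero] <;> linarith [hkey, hceB, hceB0, haB, haB0, hρ0]
  -- membership of μstar
  have hμstarmem : μstar ∈ tvUncertaintySet μ0 ρ :=
    ⟨hprob, fun B hB => hTV B hB⟩
  have hVintP : ∀ (μ : Measure S), IsProbabilityMeasure μ → Integrable V μ := by
    intro μ hμ
    haveI := hμ
    exact integrable_of_bounds μ hV hV0 hVH
  refine ⟨αs, ⟨hαs0, hαsH⟩, ?_, ?_⟩
  · -- sInf characterization
    have hmem : ((∫ s, min (V s) αs ∂μ0) - ρ * αs) ∈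
        {x : ℝ | ∃ μ ∈ tvUncertaintySet μ0 ρ, x = ∫ s, V s ∂μ} :=
      ⟨μstar, hμstarmem, hval.symm⟩
    have hlb : ∀ x ∈ {x : ℝ | ∃ μ ∈ tvUncertaintySet μ0 ρ, x = ∫ s, V s ∂μ},
        (∫ s, min (V s) αs ∂μ0) - ρ * αs ≤ x := by
      rintro x ⟨μ, ⟨hμprob, hμtv⟩, rfl⟩
      haveI := hμprob
      have h1 : ∫ s, min (V s) αs ∂μ0 ≤ (∫ s, min (V s) αs ∂μ) + ρ * αs :=
        tv_weak_duality μ0 μ hρ0 hαs0 (hV.min measurable_const)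
          (fun s => le_min (hV0 s) hαs0) (fun s => min_le_right _ _)
          (fun B hB => by
            have := abs_le.1 (hμtv B hB)
            linarith [this.1])
      have h2 : ∫ s, min (V s) αs ∂μ ≤ ∫ s, V s ∂μ :=
        integral_mono
          (integrable_of_bounds μ (hV.min measurable_const)
            (fun s => le_min (hV0 s) hαs0)
            (fun s => le_trans (min_le_left _ _) (hVH s)))
          (hVintP μ hμprob) (fun s => min_le_left _ _)
      linarith
    exact le_antisymm (le_csInf ⟨_, hmem⟩ hlb) (csInf_le ⟨_, hlb⟩ hmem)
  · -- optimality of αs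
    rintro α' ⟨hα'0, hα'H⟩
    have h1 : ∫ s, min (V s) α' ∂μ0 ≤ (∫ s, min (V s) α' ∂μstar) + ρ * α' :=
      tv_weak_duality μ0 μstar hρ0 hα'0 (hV.min measurable_const)
        (fun s => le_min (hV0 s) hα'0) (fun s => min_le_right _ _)
        (fun B hB => by
          have := abs_le.1 (hTV B hB)
          linarith [this.1])
    have h2 : ∫ s, min (V s) α' ∂μstar ≤ ∫ s, V s ∂μstar :=
      integral_mono
        (integrable_of_bounds μstar (hV.min measurable_const)
          (fun s => le_min (hV0 s) hα'0)
          (fun s => le_trans (min_le_left _ _) (hVH s)))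
        (hVintP μstar hprob) (fun s => min_le_left _ _)
    linarith [hval]
end

section
/- Let S be a measurable space in which all singleton sets are measurable, μ⁰ a probability measure on S, ρ ∈ [0,1], H > 0, and V : S → ℝ a measurable function with 0 ≤ V(s) ≤ H for all s which attains its infimum, i.e. there exists s* ∈ S with V(s*) = V_min where V_min = inf_s V(s); let V_max = sup_s V(s). Then inf_{μ ∈ 𝒰^ρ(μ⁰)} ∫ V dμ = sup_{α ∈ [V_min, V_max]} ( ∫ [V]_α dμ⁰ − ρ·(α − inf_s min(V(s), α)) ), and moreover the same value is obtained when α ranges over the larger interval [0,H]. -/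
open MeasureTheory

section Aux
variable {S : Type*} [MeasurableSpace S]

lemma integrable_of_abs_le (μ : Measure S) [IsFiniteMeasure μ]
    {f : S → ℝ} (hf : Measurable f) {c : ℝ} (h : ∀ s, |f s| ≤ c) : Integrable f μ :=
  Integrable.mono' (integrable_const c) hf.aestronglyMeasurable
    (Filter.Eventually.of_forall (fun s => (Real.norm_eq_abs _ ▸ h s)))


lemma tv_integral_bound (μ ν : Measure S)
    [IsProbabilityMeasure μ] [IsProbabilityMeasure ν] {ρ : ℝ}
    (hTV : ∀ A : Set S, MeasurableSet A → |(μ A).toReal - (ν A).toReal| ≤ ρ)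
    {f : S → ℝ} (hf : Measurable f) {c : ℝ} (hc : 0 ≤ c)
    (h0 : ∀ s, 0 ≤ f s) (h1 : ∀ s, f s ≤ c) :
    |∫ s, f s ∂μ - ∫ s, f s ∂ν| ≤ ρ * c := by
  have habs : ∀ s, |f s| ≤ c := fun s => abs_le.2 ⟨by linarith [h0 s], h1 s⟩
  have hintμ : Integrable f μ := integrable_of_abs_le μ hf habs
  have hintν : Integrable f ν := integrable_of_abs_le ν hf habs
  set F : ℝ → ℝ := fun t => (μ {a | t < f a}).toReal with hF
  set G : ℝ → ℝ := fun t => (ν {a | t < f a}).toReal with hG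
  have hFanti : Antitone F := fun s t hst =>
    ENNReal.toReal_mono (measure_ne_top _ _) (measure_mono (fun a ha => lt_of_le_of_lt hst ha))
  have hGanti : Antitone G := fun s t hst =>
    ENNReal.toReal_mono (measure_ne_top _ _) (measure_mono (fun a ha => lt_of_le_of_lt hst ha))
  have hμeq : ∫ s, f s ∂μ = ∫ t in Set.Ioi (0:ℝ), F t :=
    hintμ.integral_eq_integral_meas_lt (Filter.Eventually.of_forall h0)
  have hνeq : ∫ s, f s ∂ν = ∫ t in Set.Ioi (0:ℝ), G t :=
    hintν.integral_eq_integral_meas_lt (Filter.Eventually.of_forall h0)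
  -- indicator bound
  have hindint : Integrable ((Set.Ioc (0:ℝ) c).indicator fun _ => (1:ℝ))
      (volume.restrict (Set.Ioi (0:ℝ))) := by
    rw [integrable_indicator_iff measurableSet_Ioc]
    exact integrableOn_const (ne_of_lt (by
      rw [Measure.restrict_apply measurableSet_Ioc]
      exact lt_of_le_of_lt (measure_mono Set.inter_subset_left) measure_Ioc_lt_top))
  have hvanish : ∀ t, c < t → F t = 0 ∧ G t = 0 := by
    intro t ht
    have : {a | t < f a} = ∅ := by
      ext a; simp only [Set.mem_setOf_eq, Set.mem_empty_iff_false, iff_false, not_lt]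
      exact le_trans (h1 a) ht.le
    constructor <;> simp [hF, hG, this]
  have hFbd : ∀ t ∈ Set.Ioi (0:ℝ), |F t| ≤ (Set.Ioc (0:ℝ) c).indicator (fun _ => (1:ℝ)) t := by
    intro t ht
    by_cases htc : t ≤ c
    · rw [Set.indicator_of_mem (Set.mem_Ioc.2 ⟨Set.mem_Ioi.1 ht, htc⟩)]
      rw [abs_of_nonneg ENNReal.toReal_nonneg]
      exact ENNReal.toReal_le_of_le_ofReal zero_le_one (by simpa using prob_le_one)
    · rw [Set.indicator_of_notMem (fun h => htc h.2), (hvanish t (not_le.1 htc)).1]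
      simp
  have hGbd : ∀ t ∈ Set.Ioi (0:ℝ), |G t| ≤ (Set.Ioc (0:ℝ) c).indicator (fun _ => (1:ℝ)) t := by
    intro t ht
    by_cases htc : t ≤ c
    · rw [Set.indicator_of_mem (Set.mem_Ioc.2 ⟨Set.mem_Ioi.1 ht, htc⟩)]
      rw [abs_of_nonneg ENNReal.toReal_nonneg]
      exact ENNReal.toReal_le_of_le_ofReal zero_le_one (by simpa using prob_le_one)
    · rw [Set.indicator_of_notMem (fun h => htc h.2), (hvanish t (not_le.1 htc)).2]
      simp
  have hFmeas : Measurable F := (Antitone.measurable hFanti)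
  have hGmeas : Measurable G := (Antitone.measurable hGanti)
  have hFint : Integrable F (volume.restrict (Set.Ioi (0:ℝ))) :=
    Integrable.mono' hindint hFmeas.aestronglyMeasurable
      ((ae_restrict_iff' measurableSet_Ioi).2 (Filter.Eventually.of_forall hFbd))
  have hGint : Integrable G (volume.restrict (Set.Ioi (0:ℝ))) :=
    Integrable.mono' hindint hGmeas.aestronglyMeasurable
      ((ae_restrict_iff' measurableSet_Ioi).2 (Filter.Eventually.of_forall hGbd))
  have hρ0 : 0 ≤ ρ := le_trans (abs_nonneg _) (hTV ∅ MeasurableSet.empty)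
  rw [hμeq, hνeq, ← integral_sub hFint hGint]
  have hbound : ∀ t ∈ Set.Ioi (0:ℝ),
      ‖F t - G t‖ ≤ (Set.Ioc (0:ℝ) c).indicator (fun _ => ρ) t := by
    intro t ht
    by_cases htc : t ≤ c
    · rw [Set.indicator_of_mem (Set.mem_Ioc.2 ⟨Set.mem_Ioi.1 ht, htc⟩), Real.norm_eq_abs]
      exact hTV _ (hf measurableSet_Ioi)
    · rw [Set.indicator_of_notMem (fun h => htc h.2), (hvanish t (not_le.1 htc)).1,
        (hvanish t (not_le.1 htc)).2]
      simp
  have hindint2 : Integrable ((Set.Ioc (0:ℝ) c).indicator fun _ => ρ)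
      (volume.restrict (Set.Ioi (0:ℝ))) := by
    rw [integrable_indicator_iff measurableSet_Ioc]
    exact integrableOn_const (ne_of_lt (by
      rw [Measure.restrict_apply measurableSet_Ioc]
      exact lt_of_le_of_lt (measure_mono Set.inter_subset_left) measure_Ioc_lt_top))
  calc |∫ t in Set.Ioi (0:ℝ), (F t - G t)|
      ≤ ∫ t in Set.Ioi (0:ℝ), (Set.Ioc (0:ℝ) c).indicator (fun _ => ρ) t := by
        rw [← Real.norm_eq_abs]
        exact norm_integral_le_of_norm_le hindint2
          ((ae_restrict_iff' measurableSet_Ioi).2 (Filter.Eventually.of_forall hbound))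
    _ = ρ * c := by
        rw [integral_indicator measurableSet_Ioc]
        rw [Measure.restrict_restrict measurableSet_Ioc]
        have : Set.Ioc (0:ℝ) c ∩ Set.Ioi 0 = Set.Ioc 0 c := by
          ext t; simp only [Set.mem_inter_iff, Set.mem_Ioc, Set.mem_Ioi, and_iff_left_iff_imp]
          exact fun h => h.1
        rw [this, setIntegral_const, measureReal_def, Real.volume_Ioc, smul_eq_mul]
        rw [ENNReal.toReal_ofReal (by linarith)]
        ring

end Aux

set_option maxHeartbeats 2000000 in
/-- Strong duality for total-variation uncertainty sets (Proposition F.1 of the paper).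
Let `S` have measurable singletons, `μ0` be a probability measure, `ρ ∈ [0,1]`, `H > 0`,
and `V : S → ℝ` measurable with `0 ≤ V ≤ H` which attains its infimum. Then
`inf_{μ ∈ 𝒰^ρ(μ0)} ∫ V dμ
  = sup_{α ∈ [V_min, V_max]} (∫ [V]_α dμ0 − ρ·(α − inf_s min(V(s), α)))`,
and the same value is obtained when `α` ranges over the larger interval `[0,H]`. -/
theorem tv_strong_duality {S : Type*} [MeasurableSpace S] [MeasurableSingletonClass S]
    (μ0 : Measure S) [IsProbabilityMeasure μ0]
    (ρ : ℝ) (hρ : ρ ∈ Set.Icc (0 : ℝ) 1) (H : ℝ) (hH : 0 < H)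
    (V : S → ℝ) (hV : Measurable V) (hV0 : ∀ s, 0 ≤ V s) (hVH : ∀ s, V s ≤ H)
    (hattain : ∃ sstar : S, V sstar = ⨅ s, V s) :
    sInf {x : ℝ | ∃ μ ∈ tvUncertaintySet μ0 ρ, x = ∫ s, V s ∂μ} =
      sSup {x : ℝ | ∃ α ∈ Set.Icc (⨅ s, V s) (⨆ s, V s),
        x = (∫ s, min (V s) α ∂μ0) - ρ * (α - ⨅ s, min (V s) α)} ∧
    sInf {x : ℝ | ∃ μ ∈ tvUncertaintySet μ0 ρ, x = ∫ s, V s ∂μ} =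
      sSup {x : ℝ | ∃ α ∈ Set.Icc (0 : ℝ) H,
        x = (∫ s, min (V s) α ∂μ0) - ρ * (α - ⨅ s, min (V s) α)} := by
  obtain ⟨hρ0, hρ1⟩ := hρ
  obtain ⟨sstar, hsstar⟩ := hattain
  have hneS : Nonempty S := ⟨sstar⟩
  set Vmin : ℝ := ⨅ s, V s with hVmindef
  set Vmax : ℝ := ⨆ s, V s with hVmaxdef
  have hbddB : BddBelow (Set.range V) := ⟨0, by rintro _ ⟨s, rfl⟩; exact hV0 s⟩
  have hbddA : BddAbove (Set.range V) := ⟨H, by rintro _ ⟨s, rfl⟩; exact hVH s⟩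
  have hVminle : ∀ s, Vmin ≤ V s := fun s => ciInf_le hbddB s
  have hVmaxge : ∀ s, V s ≤ Vmax := fun s => le_ciSup hbddA s
  have hVmin0 : 0 ≤ Vmin := le_ciInf hV0
  have hVmaxH : Vmax ≤ H := ciSup_le hVH
  have hVminmax : Vmin ≤ Vmax := le_trans (hVminle sstar) (hVmaxge sstar)
  have hinfmin : ∀ α : ℝ, (⨅ s, min (V s) α) = min Vmin α := by
    intro α
    refine le_antisymm ?_ (le_ciInf fun s => min_le_min (hVminle s) le_rfl)
    have hb : BddBelow (Set.range fun s => min (V s) α) :=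
      ⟨min 0 α, by rintro _ ⟨s, rfl⟩; exact min_le_min (hV0 s) le_rfl⟩
    calc (⨅ s, min (V s) α) ≤ min (V sstar) α := ciInf_le hb sstar
      _ = min Vmin α := by rw [hsstar]
  have hintV : ∀ (μ : Measure S) [IsFiniteMeasure μ], Integrable V μ := fun μ _ =>
    integrable_of_abs_le μ hV fun s => abs_le.2 ⟨by linarith [hV0 s], hVH s⟩
  have hintmin : ∀ (α : ℝ) (μ : Measure S) [IsFiniteMeasure μ],
      Integrable (fun s => min (V s) α) μ := fun α μ _ =>
    integrable_of_abs_le μ (hV.min measurable_const) fun s =>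
      (abs_min_le_max_abs_abs).trans
        (max_le_max (abs_le.2 ⟨by linarith [hV0 s], hVH s⟩) le_rfl)

  -- weak duality
  have hweak : ∀ α : ℝ, ∀ μ : Measure S, μ ∈ tvUncertaintySet μ0 ρ →
      (∫ s, min (V s) α ∂μ0) - ρ * (α - min Vmin α) ≤ ∫ s, V s ∂μ := by
    intro α μ hμ
    obtain ⟨hμp, hμTV⟩ := hμ
    haveI := hμp
    set a : ℝ := min Vmin α with ha
    have haα : a ≤ α := min_le_right _ _
    have hg0 : ∀ s, 0 ≤ min (V s) α - a := fun s => by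
      have : a ≤ min (V s) α := min_le_min (hVminle s) le_rfl
      linarith
    have hg1 : ∀ s, min (V s) α - a ≤ α - a := fun s => by
      have : min (V s) α ≤ α := min_le_right _ _
      linarith
    have key := tv_integral_bound μ0 μ (fun A hA => by rw [abs_sub_comm]; exact hμTV A hA)
      ((hV.min measurable_const).sub measurable_const) (by linarith : (0:ℝ) ≤ α - a) hg0 hg1
    have h1 : ∫ s, (min (V s) α - a) ∂μ0 = (∫ s, min (V s) α ∂μ0) - a := by
      rw [integral_sub (hintmin α μ0) (integrable_const a), integral_const]
      simp
    have h2 : ∫ s, (min (V s) α - a) ∂μ = (∫ s, min (V s) α ∂μ) - a := by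
      rw [integral_sub (hintmin α μ) (integrable_const a), integral_const]
      simp
    change |∫ s, (min (V s) α - a) ∂μ0 - ∫ s, (min (V s) α - a) ∂μ| ≤ ρ * (α - a) at key
    rw [h1, h2] at key
    have h3 : ∫ s, min (V s) α ∂μ ≤ ∫ s, V s ∂μ :=
      integral_mono (hintmin α μ) (hintV μ) fun s => min_le_left _ _
    have hk := abs_le.1 key
    linarith [hk.1, hk.2]
  -- the quantile
  set T : Set ℝ := {α | Vmin ≤ α ∧ (μ0 {s | α < V s}).toReal ≤ ρ} with hTdef
  have hVmaxT : Vmax ∈ T := by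
    refine ⟨hVminmax, ?_⟩
    have he : {s | Vmax < V s} = ∅ := by
      ext s
      simp only [Set.mem_setOf_eq, Set.mem_empty_iff_false, iff_false, not_lt]
      exact hVmaxge s
    rw [he]
    simpa using hρ0
  have hTne : T.Nonempty := ⟨Vmax, hVmaxT⟩
  have hTbdd : BddBelow T := ⟨Vmin, fun x hx => hx.1⟩
  set αs : ℝ := sInf T with hαsdef
  have hαs1 : Vmin ≤ αs := le_csInf hTne fun x hx => hx.1
  have hαs2 : αs ≤ Vmax := csInf_le hTbdd hVmaxT
  have hq1 : μ0 {s | αs < V s} ≤ ENNReal.ofReal ρ := by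
    have hseteq : {s | αs < V s} = ⋃ n : ℕ, {s | αs + 1/(n+1) < V s} := by
      ext s
      simp only [Set.mem_setOf_eq, Set.mem_iUnion]
      constructor
      · intro h
        obtain ⟨n, hn⟩ := exists_nat_one_div_lt (by linarith : (0:ℝ) < V s - αs)
        exact ⟨n, by linarith⟩
      · rintro ⟨n, hn⟩
        have : (0:ℝ) < 1/(n+1) := by positivity
        linarith
    have hmono : Monotone fun n : ℕ => {s | αs + 1/(n+1) < V s} := by
      intro n k hnk s hs
      simp only [Set.mem_setOf_eq] at hs ⊢
      have h1 : (1:ℝ)/(k+1) ≤ 1/(n+1) := by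
        apply one_div_le_one_div_of_le (by positivity)
        have : (n:ℝ) ≤ k := Nat.cast_le.2 hnk
        linarith
      linarith
    rw [hseteq, hmono.measure_iUnion]
    refine iSup_le fun n => ?_
    have hlt : αs < αs + 1/(n+1) := by
      have : (0:ℝ) < 1/(n+1) := by positivity
      linarith
    obtain ⟨β, hβT, hβlt⟩ := exists_lt_of_csInf_lt hTne hlt
    have hsub : {s | αs + 1/(n+1) < V s} ⊆ {s | β < V s} := fun s hs => by
      simp only [Set.mem_setOf_eq] at hs ⊢
      linarith
    calc μ0 {s | αs + 1/(n+1) < V s} ≤ μ0 {s | β < V s} := measure_mono hsub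
      _ = ENNReal.ofReal ((μ0 {s | β < V s}).toReal) :=
          (ENNReal.ofReal_toReal (measure_ne_top _ _)).symm
      _ ≤ ENNReal.ofReal ρ := ENNReal.ofReal_le_ofReal hβT.2
  have hq2 : ENNReal.ofReal ρ ≤ μ0 {s | αs ≤ V s} := by
    have hsetEq : {s | αs ≤ V s} = ⋂ n : ℕ, {s | αs - 1/(n+1) < V s} := by
      ext s
      simp only [Set.mem_setOf_eq, Set.mem_iInter]
      constructor
      · intro h n
        have : (0:ℝ) < 1/(n+1) := by positivity
        linarith
      · intro h
        by_contra hc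
        push_neg at hc
        obtain ⟨n, hn⟩ := exists_nat_one_div_lt (by linarith : (0:ℝ) < αs - V s)
        have := h n
        linarith
    have hanti : Antitone fun n : ℕ => {s | αs - 1/(n+1) < V s} := by
      intro n k hnk s hs
      simp only [Set.mem_setOf_eq] at hs ⊢
      have h1 : (1:ℝ)/(k+1) ≤ 1/(n+1) := by
        apply one_div_le_one_div_of_le (by positivity)
        have : (n:ℝ) ≤ k := Nat.cast_le.2 hnk
        linarith
      linarith
    rw [hsetEq, hanti.measure_iInter
      (fun n => (hV measurableSet_Ioi).nullMeasurableSet) ⟨0, measure_ne_top _ _⟩]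
    refine le_iInf fun n => ?_
    have hβ : αs - 1/(n+1) < αs := by
      have : (0:ℝ) < 1/(n+1) := by positivity
      linarith
    have hβnT : αs - 1/(n+1) ∉ T := fun h => absurd (csInf_le hTbdd h) (not_le.2 hβ)
    by_cases hcase : Vmin ≤ αs - 1/(n+1)
    · have hn : ¬ (μ0 {s | αs - 1/(n+1) < V s}).toReal ≤ ρ := fun h => hβnT ⟨hcase, h⟩
      have hlt : ρ ≤ (μ0 {s | αs - 1/(n+1) < V s}).toReal := (not_le.1 hn).le
      calc ENNReal.ofReal ρ ≤ ENNReal.ofReal ((μ0 {s | αs - 1/(n+1) < V s}).toReal) :=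
            ENNReal.ofReal_le_ofReal hlt
        _ = μ0 {s | αs - 1/(n+1) < V s} := ENNReal.ofReal_toReal (measure_ne_top _ _)
    · have hu : {s | αs - 1/(n+1) < V s} = Set.univ := by
        ext s
        simp only [Set.mem_setOf_eq, Set.mem_univ, iff_true]
        push_neg at hcase
        exact lt_of_lt_of_le hcase (hVminle s)
      rw [hu, measure_univ]
      exact ENNReal.ofReal_le_one.2 hρ1

  -- the three level sets
  set A : Set S := {s | V s < αs} with hAdef
  set B : Set S := {s | V s = αs} with hBdef
  set C : Set S := {s | αs < V s} with hCdef
  have hmA : MeasurableSet A := hV measurableSet_Iio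
  have hmB : MeasurableSet B := hV (measurableSet_singleton αs)
  have hmC : MeasurableSet C := hV measurableSet_Ioi
  set m : ℝ := (μ0 C).toReal with hmdef
  set M : ℝ := (μ0 B).toReal with hMdef
  have hm0 : 0 ≤ m := ENNReal.toReal_nonneg
  have hM0 : 0 ≤ M := ENNReal.toReal_nonneg
  have hmρ : m ≤ ρ := ENNReal.toReal_le_of_le_ofReal hρ0 hq1
  have hMm : ρ ≤ M + m := by
    have hunion : {s | αs ≤ V s} = B ∪ C := by
      ext s
      simp only [Set.mem_setOf_eq, Set.mem_union, hBdef, hCdef]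
      constructor
      · intro h
        rcases eq_or_lt_of_le h with h' | h'
        · exact Or.inl h'.symm
        · exact Or.inr h'
      · rintro (h | h)
        · exact le_of_eq h.symm
        · exact h.le
    have hdisj : Disjoint B C := by
      rw [Set.disjoint_left]
      intro s hsB hsC
      simp only [hBdef, hCdef, Set.mem_setOf_eq] at hsB hsC
      linarith
    have he : μ0 {s | αs ≤ V s} = μ0 B + μ0 C := by rw [hunion, measure_union hdisj hmC]
    have h2 : (μ0 {s | αs ≤ V s}).toReal = M + m := by
      rw [he, ENNReal.toReal_add (measure_ne_top _ _) (measure_ne_top _ _)]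
    have h3 : ρ ≤ (μ0 {s | αs ≤ V s}).toReal := by
      rw [← ENNReal.toReal_ofReal hρ0]
      exact ENNReal.toReal_mono (measure_ne_top _ _) hq2
    linarith
  -- the retained fraction at level αs
  set θr : ℝ := (M + m - ρ)/M with hθrdef
  have hθM : θr * M = M + m - ρ := by
    by_cases hMz : M = 0
    · rw [hθrdef, hMz]
      simp only [div_zero, zero_mul, mul_zero]
      linarith
    · rw [hθrdef]
      field_simp
  have hθ0 : 0 ≤ θr := div_nonneg (by linarith) hM0
  have hθ1 : θr ≤ 1 := by
    by_cases hMz : M = 0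
    · rw [hθrdef, hMz]
      simp
    · rw [hθrdef, div_le_one (lt_of_le_of_ne hM0 (Ne.symm hMz))]
      linarith
  -- the optimal measure
  set μstar : Measure S := μ0.restrict A + (ENNReal.ofReal θr) • μ0.restrict B
      + (ENNReal.ofReal ρ) • Measure.dirac sstar with hμstardef
  have hμstar_apply : ∀ A' : Set S, MeasurableSet A' →
      (μstar A').toReal = (μ0 (A' ∩ A)).toReal + θr * (μ0 (A' ∩ B)).toReal
        + ρ * Set.indicator A' (fun _ => (1:ℝ)) sstar := by
    intro A' hA'
    have e1 : μstar A' = μ0 (A' ∩ A) + ENNReal.ofReal θr * μ0 (A' ∩ B)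
        + ENNReal.ofReal ρ * Set.indicator A' (1 : S → ENNReal) sstar := by
      rw [hμstardef]
      simp [Measure.add_apply, Measure.smul_apply, smul_eq_mul,
        Measure.restrict_apply hA', Measure.dirac_apply' _ hA']
    rw [e1]
    have ne1 : μ0 (A' ∩ A) ≠ ⊤ := measure_ne_top _ _
    have ne2 : ENNReal.ofReal θr * μ0 (A' ∩ B) ≠ ⊤ :=
      ENNReal.mul_ne_top ENNReal.ofReal_ne_top (measure_ne_top _ _)
    have ne3 : ENNReal.ofReal ρ * Set.indicator A' (1 : S → ENNReal) sstar ≠ ⊤ := by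
      by_cases hs : sstar ∈ A' <;>
        simp [hs, ENNReal.mul_ne_top, ENNReal.ofReal_ne_top]
    rw [ENNReal.toReal_add (by exact ENNReal.add_ne_top.2 ⟨ne1, ne2⟩) ne3,
      ENNReal.toReal_add ne1 ne2, ENNReal.toReal_mul, ENNReal.toReal_mul,
      ENNReal.toReal_ofReal hθ0, ENNReal.toReal_ofReal hρ0]
    congr 1
    by_cases hs : sstar ∈ A' <;> simp [hs]
  -- partition identity
  have hpartgen : ∀ A' : Set S, MeasurableSet A' →
      (μ0 A').toReal = (μ0 (A' ∩ A)).toReal + (μ0 (A' ∩ B)).toReal + (μ0 (A' ∩ C)).toReal := by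
    intro A' hA'
    have hu : (A' ∩ A) ∪ ((A' ∩ B) ∪ (A' ∩ C)) = A' := by
      ext s
      simp only [Set.mem_union, Set.mem_inter_iff, hAdef, hBdef, hCdef, Set.mem_setOf_eq]
      constructor
      · rintro (⟨h, _⟩ | ⟨h, _⟩ | ⟨h, _⟩) <;> exact h
      · intro h
        rcases lt_trichotomy (V s) αs with h1 | h1 | h1
        · exact Or.inl ⟨h, h1⟩
        · exact Or.inr (Or.inl ⟨h, h1⟩)
        · exact Or.inr (Or.inr ⟨h, h1⟩)
    have hd1 : Disjoint (A' ∩ B) (A' ∩ C) := by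
      rw [Set.disjoint_left]
      rintro s ⟨_, hsB⟩ ⟨_, hsC⟩
      simp only [hBdef, hCdef, Set.mem_setOf_eq] at hsB hsC
      linarith
    have hd2 : Disjoint (A' ∩ A) ((A' ∩ B) ∪ (A' ∩ C)) := by
      rw [Set.disjoint_left]
      rintro s ⟨_, hsA⟩ (⟨_, hs2⟩ | ⟨_, hs2⟩) <;>
        simp only [hAdef, hBdef, hCdef, Set.mem_setOf_eq] at hsA hs2 <;> linarith
    have he : μ0 A' = μ0 (A' ∩ A) + (μ0 (A' ∩ B) + μ0 (A' ∩ C)) := by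
      conv_lhs => rw [← hu]
      rw [measure_union hd2 ((hA'.inter hmB).union (hA'.inter hmC)),
        measure_union hd1 (hA'.inter hmC)]
    rw [he, ENNReal.toReal_add (measure_ne_top _ _)
        (ENNReal.add_ne_top.2 ⟨measure_ne_top _ _, measure_ne_top _ _⟩),
      ENNReal.toReal_add (measure_ne_top _ _) (measure_ne_top _ _)]
    ring

  -- μstar is a probability measure
  haveI hμstarP : IsProbabilityMeasure μstar := by
    constructor
    rw [← ENNReal.toReal_eq_one_iff, hμstar_apply Set.univ MeasurableSet.univ]
    simp only [Set.univ_inter, Set.indicator_of_mem (Set.mem_univ sstar)]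
    have hpart := hpartgen Set.univ MeasurableSet.univ
    simp only [Set.univ_inter, measure_univ, ENNReal.toReal_one] at hpart
    rw [← hMdef] at hpart
    linarith [hθM]
  -- μstar is in the uncertainty set
  have hμstarTV : ∀ A' : Set S, MeasurableSet A' →
      |(μstar A').toReal - (μ0 A').toReal| ≤ ρ := by
    intro A' hA'
    rw [hμstar_apply A' hA', hpartgen A' hA']
    have hxB : (μ0 (A' ∩ B)).toReal ≤ M :=
      ENNReal.toReal_mono (measure_ne_top _ _) (measure_mono Set.inter_subset_right)
    have hxC : (μ0 (A' ∩ C)).toReal ≤ m :=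
      ENNReal.toReal_mono (measure_ne_top _ _) (measure_mono Set.inter_subset_right)
    have hxB0 : 0 ≤ (μ0 (A' ∩ B)).toReal := ENNReal.toReal_nonneg
    have hxC0 : 0 ≤ (μ0 (A' ∩ C)).toReal := ENNReal.toReal_nonneg
    have hind0 : 0 ≤ Set.indicator A' (fun _ => (1:ℝ)) sstar := by
      by_cases hs : sstar ∈ A' <;> simp [hs]
    have hind1 : Set.indicator A' (fun _ => (1:ℝ)) sstar ≤ 1 := by
      by_cases hs : sstar ∈ A' <;> simp [hs]
    have h1 : (1 - θr) * (μ0 (A' ∩ B)).toReal ≤ (1 - θr) * M :=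
      mul_le_mul_of_nonneg_left hxB (by linarith)
    have h3 : 0 ≤ ρ * Set.indicator A' (fun _ => (1:ℝ)) sstar := mul_nonneg hρ0 hind0
    have h4 : ρ * Set.indicator A' (fun _ => (1:ℝ)) sstar ≤ ρ :=
      mul_le_of_le_one_right hρ0 hind1
    rw [abs_le]
    constructor <;> nlinarith [hθM, mul_nonneg (sub_nonneg.2 hθ1) hxB0]
  have hμstarMem : μstar ∈ tvUncertaintySet μ0 ρ := ⟨hμstarP, hμstarTV⟩
  -- the integral of V against μstar
  have hintμstar : ∫ s, V s ∂μstar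
      = (∫ s in A, V s ∂μ0) + θr * (M * αs) + ρ * Vmin := by
    have i1 : Integrable V (μ0.restrict A) := hintV (μ0.restrict A)
    have i2 : Integrable V (ENNReal.ofReal θr • μ0.restrict B) :=
      (hintV (μ0.restrict B)).smul_measure ENNReal.ofReal_ne_top
    have i3 : Integrable V (ENNReal.ofReal ρ • Measure.dirac sstar) :=
      (hintV (Measure.dirac sstar)).smul_measure ENNReal.ofReal_ne_top
    rw [hμstardef]
    rw [integral_add_measure (Integrable.add_measure i1 i2) i3,
      integral_add_measure i1 i2,
      integral_smul_measure, integral_smul_measure, integral_dirac,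
      ENNReal.toReal_ofReal hθ0, ENNReal.toReal_ofReal hρ0, hsstar]
    have hB : ∫ s in B, V s ∂μ0 = M * αs := by
      rw [setIntegral_congr_fun hmB (fun s hs => hs), setIntegral_const, smul_eq_mul]; rfl
    rw [hB, smul_eq_mul, smul_eq_mul]
  -- the value matches the dual objective at αs
  have hdualval : (∫ s in A, V s ∂μ0) + θr * (M * αs) + ρ * Vmin
      = (∫ s, min (V s) αs ∂μ0) - ρ * (αs - min Vmin αs) := by
    have hsplit : ∫ s, min (V s) αs ∂μ0
        = (∫ s in A, V s ∂μ0) + (M * αs + m * αs) := by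
      have hu : (A ∪ (B ∪ C)) = Set.univ := by
        ext s
        simp only [Set.mem_union, hAdef, hBdef, hCdef, Set.mem_setOf_eq, Set.mem_univ,
          iff_true]
        rcases lt_trichotomy (V s) αs with h1 | h1 | h1
        · exact Or.inl h1
        · exact Or.inr (Or.inl h1)
        · exact Or.inr (Or.inr h1)
      have hd1 : Disjoint B C := by
        rw [Set.disjoint_left]
        intro s hsB hsC
        simp only [hBdef, hCdef, Set.mem_setOf_eq] at hsB hsC
        linarith
      have hd2 : Disjoint A (B ∪ C) := by
        rw [Set.disjoint_left]
        rintro s hsA (hs2 | hs2) <;>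
          simp only [hAdef, hBdef, hCdef, Set.mem_setOf_eq] at hsA hs2 <;> linarith
      calc ∫ s, min (V s) αs ∂μ0
          = ∫ s in A ∪ (B ∪ C), min (V s) αs ∂μ0 := by rw [hu, setIntegral_univ]
        _ = (∫ s in A, min (V s) αs ∂μ0)
            + ((∫ s in B, min (V s) αs ∂μ0) + (∫ s in C, min (V s) αs ∂μ0)) := by
            rw [setIntegral_union hd2 (hmB.union hmC)
                ((hintmin αs μ0).integrableOn) ((hintmin αs μ0).integrableOn),
              setIntegral_union hd1 hmC
                ((hintmin αs μ0).integrableOn) ((hintmin αs μ0).integrableOn)]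
        _ = (∫ s in A, V s ∂μ0) + (M * αs + m * αs) := by
            congr 1
            · exact setIntegral_congr_fun hmA fun s hs => min_eq_left (le_of_lt hs)
            · congr 1
              · rw [setIntegral_congr_fun hmB (fun s hs => by
                    rw [show V s = αs from hs, min_self]), setIntegral_const, smul_eq_mul]; rfl
              · rw [setIntegral_congr_fun hmC
                    (fun s hs => min_eq_right (le_of_lt hs)), setIntegral_const, smul_eq_mul]; rfl
    rw [hsplit, min_eq_left hαs1]
    have hth : θr * (M * αs) = (M + m - ρ) * αs := by rw [← mul_assoc, hθM]
    linarith [hth]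

  -- conclusion
  have hμ0Mem : μ0 ∈ tvUncertaintySet μ0 ρ :=
    ⟨inferInstance, fun A' _ => by rw [sub_self, abs_zero]; exact hρ0⟩
  have hPne : {x : ℝ | ∃ μ ∈ tvUncertaintySet μ0 ρ, x = ∫ s, V s ∂μ}.Nonempty :=
    ⟨∫ s, V s ∂μ0, μ0, hμ0Mem, rfl⟩
  have hPbdd : BddBelow {x : ℝ | ∃ μ ∈ tvUncertaintySet μ0 ρ, x = ∫ s, V s ∂μ} := by
    refine ⟨0, ?_⟩
    rintro x ⟨μ, hμ, rfl⟩
    haveI := hμ.1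
    exact integral_nonneg hV0
  have main : ∀ Dset : Set ℝ,
      (∀ d ∈ Dset, ∀ μ ∈ tvUncertaintySet μ0 ρ, d ≤ ∫ s, V s ∂μ) →
      ((∫ s, min (V s) αs ∂μ0) - ρ * (αs - min Vmin αs)) ∈ Dset →
      sInf {x : ℝ | ∃ μ ∈ tvUncertaintySet μ0 ρ, x = ∫ s, V s ∂μ} = sSup Dset := by
    intro Dset hwd hmem
    have hDbdd : BddAbove Dset := ⟨∫ s, V s ∂μ0, fun d hd => hwd d hd μ0 hμ0Mem⟩
    apply le_antisymm
    · calc sInf {x : ℝ | ∃ μ ∈ tvUncertaintySet μ0 ρ, x = ∫ s, V s ∂μ}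
          ≤ ∫ s, V s ∂μstar := csInf_le hPbdd ⟨μstar, hμstarMem, rfl⟩
        _ = (∫ s, min (V s) αs ∂μ0) - ρ * (αs - min Vmin αs) := by
            rw [hintμstar]; exact hdualval
        _ ≤ sSup Dset := le_csSup hDbdd hmem
    · exact csSup_le ⟨_, hmem⟩ fun d hd => le_csInf hPne (by
        rintro p ⟨μ, hμ, rfl⟩
        exact hwd d hd μ hμ)
  constructor
  · apply main
    · rintro d ⟨α, hαIcc, rfl⟩ μ hμ
      rw [hinfmin α]
      exact hweak α μ hμ
    · exact ⟨αs, ⟨hαs1, hαs2⟩, by rw [hinfmin αs]⟩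
  · apply main
    · rintro d ⟨α, hαIcc, rfl⟩ μ hμ
      rw [hinfmin α]
      exact hweak α μ hμ
    · exact ⟨αs, ⟨by linarith, by linarith⟩, by rw [hinfmin αs]⟩
end

section
/- Let d, n ≥ 1 be integers, H ≥ 0, ρ ∈ [0,1], and λ a real with 0 < λ ≤ n. Let φ_1, …, φ_n ∈ ℝ^d with ‖φ_τ‖₂ ≤ 1 for each τ, let σ̄_1, …, σ̄_n be reals with σ̄_τ ≥ 1, and for each τ let v_τ : [0,H] → [0,H] be an arbitrary function. Define the weighted Gram matrix Σ = λ I_d + ∑_{τ=1}^n σ̄_τ^{-2} φ_τ φ_τ^⊤, for each α ∈ [0,H] the vector ẑ(α) = Σ^{-1} ∑_{τ=1}^n σ̄_τ^{-2} v_τ(α) φ_τ, and the vector ν ∈ ℝ^d by ν_i = sup_{α ∈ [0,H]} ( ẑ_i(α) − ρ·α ). Then ‖ν‖₂ ≤ 2H√(d n / λ). -/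
open Finset

/-- The weighted Gram matrix `Σ = λ I_d + ∑_{τ=1}^n σ̄_τ^{-2} φ_τ φ_τ^⊤`. -/
noncomputable def weightedGram (d n : ℕ) (lam : ℝ) (φ : Fin n → Fin d → ℝ)
    (σbar : Fin n → ℝ) : Matrix (Fin d) (Fin d) ℝ :=
  lam • (1 : Matrix (Fin d) (Fin d) ℝ) +
    ∑ τ, ((σbar τ) ^ 2)⁻¹ • Matrix.vecMulVec (φ τ) (φ τ)

/-- The variance-weighted ridge-regression solution
`ẑ(α) = Σ^{-1} ∑_{τ=1}^n σ̄_τ^{-2} v_τ(α) φ_τ`. -/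
noncomputable def ridgeSolution (d n : ℕ) (lam : ℝ) (φ : Fin n → Fin d → ℝ)
    (σbar : Fin n → ℝ) (v : Fin n → ℝ → ℝ) (α : ℝ) : Fin d → ℝ :=
  (weightedGram d n lam φ σbar)⁻¹.mulVec (∑ τ, (((σbar τ) ^ 2)⁻¹ * v τ α) • φ τ)

private lemma gram_mulVec (d n : ℕ) (lam : ℝ) (φ : Fin n → Fin d → ℝ)
    (σbar : Fin n → ℝ) (x : Fin d → ℝ) :
    (weightedGram d n lam φ σbar).mulVec x
      = lam • x + ∑ τ, ((((σbar τ)^2)⁻¹) * (dotProduct (φ τ) x)) • φ τ := by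
  funext i
  simp only [weightedGram, Matrix.mulVec, dotProduct, Matrix.add_apply,
    Matrix.smul_apply, Matrix.one_apply, Matrix.sum_apply, Matrix.vecMulVec_apply,
    smul_eq_mul, add_mul, Finset.sum_mul, Finset.sum_add_distrib, Pi.add_apply,
    Pi.smul_apply, Finset.sum_apply, mul_ite, mul_zero, ite_mul, zero_mul,
    Finset.sum_ite_eq, Finset.mem_univ, if_true, Finset.mul_sum]
  rw [Finset.sum_comm]
  congr 1
  · ring
  · apply Finset.sum_congr rfl; intro τ _; apply Finset.sum_congr rfl; intro j _; ring

private lemma dot_sum_smul (d n : ℕ) (φ : Fin n → Fin d → ℝ) (x : Fin d → ℝ)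
    (c : Fin n → ℝ) :
    dotProduct x (∑ τ, c τ • φ τ) = ∑ τ, c τ * dotProduct (φ τ) x := by
  simp only [dotProduct, Finset.sum_apply, Pi.smul_apply, smul_eq_mul,
    Finset.mul_sum]
  rw [Finset.sum_comm]
  apply Finset.sum_congr rfl; intro τ _; apply Finset.sum_congr rfl; intro i _; ring

private lemma quad_form (d n : ℕ) (lam : ℝ) (φ : Fin n → Fin d → ℝ)
    (σbar : Fin n → ℝ) (x : Fin d → ℝ) :
    dotProduct x ((weightedGram d n lam φ σbar).mulVec x)
      = lam * (∑ i, x i ^ 2)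
        + ∑ τ, (((σbar τ)^2)⁻¹) * (dotProduct (φ τ) x) ^ 2 := by
  rw [gram_mulVec, dotProduct_add, dot_sum_smul]
  congr 1
  · simp only [dotProduct, Pi.smul_apply, smul_eq_mul]
    rw [Finset.mul_sum]
    apply Finset.sum_congr rfl; intro j _; ring
  · apply Finset.sum_congr rfl; intro τ _; ring

private lemma gram_posDef (d n : ℕ) (lam : ℝ) (hlam : 0 < lam)
    (φ : Fin n → Fin d → ℝ) (σbar : Fin n → ℝ) (hσ : ∀ τ, 1 ≤ σbar τ) :
    (weightedGram d n lam φ σbar).PosDef := by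
  rw [Matrix.posDef_iff_dotProduct_mulVec]
  constructor
  · show _ = _
    funext i j
    simp only [weightedGram, Matrix.conjTranspose_apply, Matrix.add_apply,
      Matrix.smul_apply, Matrix.one_apply, Matrix.sum_apply, Matrix.vecMulVec_apply,
      smul_eq_mul, star_trivial]
    have hite : (if j = i then (lam:ℝ) * 1 else lam * 0) = (if i = j then lam * 1 else lam * 0) := by
      by_cases h : i = j <;> simp [h, eq_comm]
    rw [mul_ite, hite, ← mul_ite]
    congr 1
    apply Finset.sum_congr rfl; intro τ _; ring
  · intro x hx
    simp only [star_trivial, quad_form]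
    have h1 : 0 < ∑ i, x i ^ 2 := by
      have : ∃ i, x i ≠ 0 := Function.ne_iff.mp hx
      obtain ⟨i, hi⟩ := this
      exact Finset.sum_pos' (fun j _ => sq_nonneg _)
        ⟨i, Finset.mem_univ i, by positivity⟩
    have h2 : 0 ≤ ∑ τ, (((σbar τ)^2)⁻¹) * (dotProduct (φ τ) x) ^ 2 :=
      Finset.sum_nonneg fun τ _ => mul_nonneg (by positivity) (sq_nonneg _)
    nlinarith

/-- key bound: every coordinate of the ridge solution is at most `H √(n/λ)`. -/
private lemma ridge_coord_bound (d n : ℕ)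
    (H : ℝ) (hH : 0 ≤ H)
    (lam : ℝ) (hlam0 : 0 < lam)
    (φ : Fin n → Fin d → ℝ)
    (σbar : Fin n → ℝ) (hσ : ∀ τ, 1 ≤ σbar τ)
    (v : Fin n → ℝ → ℝ) (α : ℝ) (hα : α ∈ Set.Icc (0 : ℝ) H)
    (hv : ∀ τ, v τ α ∈ Set.Icc (0 : ℝ) H) (i : Fin d) :
    |ridgeSolution d n lam φ σbar v α i| ≤ H * Real.sqrt ((n : ℝ) / lam) := by
  classical
  set M := weightedGram d n lam φ σbar with hMdef
  set b : Fin d → ℝ := ∑ τ, (((σbar τ) ^ 2)⁻¹ * v τ α) • φ τ with hbdef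
  set z : Fin d → ℝ := ridgeSolution d n lam φ σbar v α with hzdef
  have hw0 : ∀ τ, (0:ℝ) < ((σbar τ)^2)⁻¹ := fun τ => by
    have := hσ τ; positivity
  have hw1 : ∀ τ, ((σbar τ)^2)⁻¹ ≤ 1 := fun τ => by
    have h := hσ τ
    rw [inv_le_one_iff₀]
    right; nlinarith
  have hpd := gram_posDef d n lam hlam0 φ σbar hσ
  have hdet : IsUnit M.det := isUnit_iff_ne_zero.mpr hpd.det_pos.ne'
  have hMz : M.mulVec z = b := by
    rw [hzdef, ridgeSolution, ← hMdef, Matrix.mulVec_mulVec,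
      Matrix.mul_nonsing_inv _ hdet, Matrix.one_mulVec]
  set t : Fin n → ℝ := fun τ => dotProduct (φ τ) z with htdef
  set K : ℝ := ∑ i, z i ^ 2 with hKdef
  set S : ℝ := ∑ τ, (((σbar τ)^2)⁻¹) * t τ ^ 2 with hSdef
  have hKnn : 0 ≤ K := Finset.sum_nonneg fun _ _ => sq_nonneg _
  have hSnn : 0 ≤ S := Finset.sum_nonneg fun τ _ =>
    mul_nonneg (hw0 τ).le (sq_nonneg _)
  have hE : lam * K + S = ∑ τ, (((σbar τ) ^ 2)⁻¹ * v τ α) * t τ := by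
    have h1 := quad_form d n lam φ σbar z
    rw [hMz, hbdef, dot_sum_smul] at h1
    rw [← h1]
  -- Cauchy–Schwarz step
  have hCS : ∑ τ, (((σbar τ) ^ 2)⁻¹ * v τ α) * t τ
      ≤ H * (Real.sqrt n * Real.sqrt S) := by
    have step1 : ∑ τ, (((σbar τ) ^ 2)⁻¹ * v τ α) * t τ
        ≤ ∑ τ, H * (Real.sqrt (((σbar τ)^2)⁻¹) * (Real.sqrt (((σbar τ)^2)⁻¹) * |t τ|)) := by
      apply Finset.sum_le_sum
      intro τ _
      have hwτ := (hw0 τ).le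
      have hvτ := hv τ
      have hsq : Real.sqrt (((σbar τ)^2)⁻¹) * Real.sqrt (((σbar τ)^2)⁻¹)
          = ((σbar τ)^2)⁻¹ := Real.mul_self_sqrt hwτ
      calc (((σbar τ) ^ 2)⁻¹ * v τ α) * t τ
          ≤ (((σbar τ) ^ 2)⁻¹ * v τ α) * |t τ| := by
            apply mul_le_mul_of_nonneg_left (le_abs_self _)
              (mul_nonneg hwτ hvτ.1)
        _ ≤ (((σbar τ) ^ 2)⁻¹ * H) * |t τ| := by
            apply mul_le_mul_of_nonneg_right _ (abs_nonneg _)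
            exact mul_le_mul_of_nonneg_left hvτ.2 hwτ
        _ = H * (Real.sqrt (((σbar τ)^2)⁻¹) * (Real.sqrt (((σbar τ)^2)⁻¹) * |t τ|)) := by
            conv_lhs => rw [← hsq]
            ring
    have step2 : ∑ τ, Real.sqrt (((σbar τ)^2)⁻¹) * (Real.sqrt (((σbar τ)^2)⁻¹) * |t τ|)
        ≤ Real.sqrt n * Real.sqrt S := by
      have hfg : (0:ℝ) ≤ ∑ τ, Real.sqrt (((σbar τ)^2)⁻¹) * (Real.sqrt (((σbar τ)^2)⁻¹) * |t τ|) :=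
        Finset.sum_nonneg fun τ _ => mul_nonneg (Real.sqrt_nonneg _)
          (mul_nonneg (Real.sqrt_nonneg _) (abs_nonneg _))
      have hcs := Finset.sum_mul_sq_le_sq_mul_sq Finset.univ
        (fun τ => Real.sqrt (((σbar τ)^2)⁻¹))
        (fun τ => Real.sqrt (((σbar τ)^2)⁻¹) * |t τ|)
      have hf2 : ∑ τ, (Real.sqrt (((σbar τ)^2)⁻¹)) ^ 2 ≤ (n : ℝ) := by
        calc ∑ τ, (Real.sqrt (((σbar τ)^2)⁻¹)) ^ 2
            = ∑ τ, ((σbar τ)^2)⁻¹ := by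
              apply Finset.sum_congr rfl; intro τ _
              exact Real.sq_sqrt (hw0 τ).le
          _ ≤ ∑ _τ : Fin n, (1:ℝ) := Finset.sum_le_sum fun τ _ => hw1 τ
          _ = n := by simp
      have hg2 : ∑ τ, (Real.sqrt (((σbar τ)^2)⁻¹) * |t τ|) ^ 2 = S := by
        rw [hSdef]
        apply Finset.sum_congr rfl; intro τ _
        rw [mul_pow, Real.sq_sqrt (hw0 τ).le, sq_abs]
      calc ∑ τ, Real.sqrt (((σbar τ)^2)⁻¹) * (Real.sqrt (((σbar τ)^2)⁻¹) * |t τ|)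
          = Real.sqrt ((∑ τ, Real.sqrt (((σbar τ)^2)⁻¹) * (Real.sqrt (((σbar τ)^2)⁻¹) * |t τ|)) ^ 2) :=
            (Real.sqrt_sq hfg).symm
        _ ≤ Real.sqrt ((n : ℝ) * S) := by
            apply Real.sqrt_le_sqrt
            refine le_trans hcs ?_
            rw [← hg2]
            apply mul_le_mul_of_nonneg_right hf2
              (Finset.sum_nonneg fun τ _ => sq_nonneg _)
        _ = Real.sqrt n * Real.sqrt S := Real.sqrt_mul (Nat.cast_nonneg n) S
    calc ∑ τ, (((σbar τ) ^ 2)⁻¹ * v τ α) * t τ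
        ≤ ∑ τ, H * (Real.sqrt (((σbar τ)^2)⁻¹) * (Real.sqrt (((σbar τ)^2)⁻¹) * |t τ|)) := step1
      _ = H * ∑ τ, Real.sqrt (((σbar τ)^2)⁻¹) * (Real.sqrt (((σbar τ)^2)⁻¹) * |t τ|) := by
          rw [Finset.mul_sum]
      _ ≤ H * (Real.sqrt n * Real.sqrt S) :=
          mul_le_mul_of_nonneg_left step2 hH
  -- E ≤ c √E with c = H √n implies E ≤ c²
  have hEnn : 0 ≤ lam * K + S := by positivity
  have hSE : Real.sqrt S ≤ Real.sqrt (lam * K + S) := by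
    apply Real.sqrt_le_sqrt; nlinarith
  have hEc : lam * K + S ≤ (H * Real.sqrt n) * Real.sqrt (lam * K + S) := by
    calc lam * K + S ≤ H * (Real.sqrt n * Real.sqrt S) := hE ▸ hCS
      _ ≤ (H * Real.sqrt n) * Real.sqrt (lam * K + S) := by
          rw [mul_assoc]
          exact mul_le_mul_of_nonneg_left
            (mul_le_mul_of_nonneg_left hSE (Real.sqrt_nonneg _)) hH
  have hEbound : lam * K + S ≤ (H * Real.sqrt n) ^ 2 := by
    set E := lam * K + S
    have hsE : Real.sqrt E ^ 2 = E := Real.sq_sqrt hEnn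
    have hcnn : 0 ≤ H * Real.sqrt n := by positivity
    nlinarith [Real.sqrt_nonneg E, sq_nonneg (Real.sqrt E - H * Real.sqrt n)]
  have hc2 : (H * Real.sqrt n) ^ 2 = H ^ 2 * n := by
    rw [mul_pow, Real.sq_sqrt (Nat.cast_nonneg n)]
  have hK : K ≤ H ^ 2 * n / lam := by
    rw [le_div_iff₀ hlam0]; nlinarith
  have hzi : z i ^ 2 ≤ H ^ 2 * n / lam := by
    refine le_trans ?_ hK
    exact Finset.single_le_sum (fun j _ => sq_nonneg (z j)) (Finset.mem_univ i)
  calc |z i| = Real.sqrt (z i ^ 2) := (Real.sqrt_sq_eq_abs _).symm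
    _ ≤ Real.sqrt (H ^ 2 * n / lam) := Real.sqrt_le_sqrt hzi
    _ = H * Real.sqrt ((n : ℝ) / lam) := by
        rw [mul_div_assoc, Real.sqrt_mul (sq_nonneg H), Real.sqrt_sq hH]


/-- Bound on the dual parameter produced by variance-weighted ridge regression (the
paper's Lemma D.1). With `Σ`, `ẑ(α)` as above and
`ν_i = sup_{α ∈ [0,H]} (ẑ_i(α) − ρ·α)`, if `‖φ_τ‖₂ ≤ 1`, `σ̄_τ ≥ 1`, `v_τ` maps `[0,H]`
into `[0,H]`, `ρ ∈ [0,1]` and `0 < λ ≤ n`, then `‖ν‖₂ ≤ 2H√(dn/λ)`. -/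
theorem dual_parameter_bound (d n : ℕ) (hd : 1 ≤ d) (hn : 1 ≤ n)
    (H : ℝ) (hH : 0 ≤ H) (ρ : ℝ) (hρ : ρ ∈ Set.Icc (0 : ℝ) 1)
    (lam : ℝ) (hlam0 : 0 < lam) (hlamn : lam ≤ n)
    (φ : Fin n → Fin d → ℝ) (hφ : ∀ τ, Real.sqrt (∑ i, φ τ i ^ 2) ≤ 1)
    (σbar : Fin n → ℝ) (hσ : ∀ τ, 1 ≤ σbar τ)
    (v : Fin n → ℝ → ℝ) (hv : ∀ τ, ∀ α ∈ Set.Icc (0 : ℝ) H, v τ α ∈ Set.Icc (0 : ℝ) H) :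
    Real.sqrt (∑ i,
        (sSup {x : ℝ | ∃ α ∈ Set.Icc (0 : ℝ) H,
          x = ridgeSolution d n lam φ σbar v α i - ρ * α}) ^ 2)
      ≤ 2 * H * Real.sqrt ((d : ℝ) * n / lam) := by
  set B : ℝ := H * Real.sqrt ((n : ℝ) / lam) with hBdef
  have hBnn : 0 ≤ B := by positivity
  have hzb : ∀ α ∈ Set.Icc (0:ℝ) H, ∀ i, |ridgeSolution d n lam φ σbar v α i| ≤ B :=
    fun α hα i => ridge_coord_bound d n H hH lam hlam0 φ σbar hσ v α hα
      (fun τ => hv τ α hα) i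
  have h0mem : (0:ℝ) ∈ Set.Icc (0:ℝ) H := ⟨le_refl 0, hH⟩
  have hsup : ∀ i : Fin d,
      (sSup {x : ℝ | ∃ α ∈ Set.Icc (0 : ℝ) H,
        x = ridgeSolution d n lam φ σbar v α i - ρ * α}) ^ 2 ≤ B ^ 2 := by
    intro i
    set Si := {x : ℝ | ∃ α ∈ Set.Icc (0 : ℝ) H,
        x = ridgeSolution d n lam φ σbar v α i - ρ * α} with hSi
    have hmem0 : ridgeSolution d n lam φ σbar v 0 i ∈ Si :=
      ⟨0, h0mem, by ring⟩
    have hub : ∀ x ∈ Si, x ≤ B := by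
      rintro x ⟨α, hα, rfl⟩
      have h1 := (abs_le.mp (hzb α hα i)).2
      have h2 : 0 ≤ ρ * α := mul_nonneg hρ.1 hα.1
      linarith
    have hbdd : BddAbove Si := ⟨B, hub⟩
    have hle : sSup Si ≤ B := csSup_le ⟨_, hmem0⟩ hub
    have hge : -B ≤ sSup Si := by
      have h1 := le_csSup hbdd hmem0
      have h2 := (abs_le.mp (hzb 0 h0mem i)).1
      linarith
    exact sq_le_sq' (by linarith) hle
  have hsum : ∑ i : Fin d,
      (sSup {x : ℝ | ∃ α ∈ Set.Icc (0 : ℝ) H,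
        x = ridgeSolution d n lam φ σbar v α i - ρ * α}) ^ 2 ≤ (d : ℝ) * B ^ 2 := by
    calc ∑ i : Fin d, (sSup {x : ℝ | ∃ α ∈ Set.Icc (0 : ℝ) H,
            x = ridgeSolution d n lam φ σbar v α i - ρ * α}) ^ 2
        ≤ ∑ _i : Fin d, B ^ 2 := Finset.sum_le_sum fun i _ => hsup i
      _ = (d : ℝ) * B ^ 2 := by simp [mul_comm]
  calc Real.sqrt (∑ i, (sSup {x : ℝ | ∃ α ∈ Set.Icc (0 : ℝ) H,
          x = ridgeSolution d n lam φ σbar v α i - ρ * α}) ^ 2)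
      ≤ Real.sqrt ((d : ℝ) * B ^ 2) := Real.sqrt_le_sqrt hsum
    _ = Real.sqrt d * B := by
        rw [Real.sqrt_mul (Nat.cast_nonneg d), Real.sqrt_sq hBnn]
    _ = H * Real.sqrt ((d : ℝ) * n / lam) := by
        rw [hBdef, ← mul_assoc, mul_comm (Real.sqrt d) H, mul_assoc,
          ← Real.sqrt_mul (Nat.cast_nonneg d), mul_div_assoc]
    _ ≤ 2 * H * Real.sqrt ((d : ℝ) * n / lam) := by
        have : 0 ≤ H * Real.sqrt ((d : ℝ) * n / lam) := by positivity
        linarith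
end

section
/- For every ε > 0, the optimistic value function class 𝒱 admits an ε-net with respect to the sup distance dist(V₁,V₂) = sup_{s∈S} |V₁(s) − V₂(s)| of cardinality at most (1 + 4L/ε)^{dℓ} · (1 + 8√d β² / (λ ε²))^{d²ℓ}; equivalently, the ε-covering entropy of 𝒱 satisfies log N_ε ≤ d·ℓ·log(1 + 4L/ε) + d²·ℓ·log(1 + 8√d β² / (λ ε²)). -/
open Finset

/-- The value function determined by parameters `w_j, Γ_j`, `1 ≤ j ≤ ℓ`:
`V(s) = max_{a∈A} max_{1≤j≤ℓ} min{ r(s,a) + φ(s,a)^⊤ w_j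
          + β ∑_i φ_i(s,a) √((Γ_j)_{ii}), H }`. -/
noncomputable def optimisticValue {S A : Type*} [Fintype A] (d l : ℕ)
    (φ : S → A → Fin d → ℝ) (r : S → A → ℝ) (β H : ℝ)
    (w : Fin l → Fin d → ℝ) (Γ : Fin l → Matrix (Fin d) (Fin d) ℝ) (s : S) : ℝ :=
  ⨆ a : A, ⨆ j : Fin l,
    min (r s a + (∑ i, φ s a i * w j i) + β * ∑ i, φ s a i * Real.sqrt (Γ j i i)) H

/-- The optimistic value function class `𝒱`: all functions of the above form with
`‖w_j‖₂ ≤ L` and Frobenius norm `‖Γ_j‖_F ≤ √d/λ`. -/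
noncomputable def optimisticClass (S A : Type*) [Fintype A] (d l : ℕ)
    (φ : S → A → Fin d → ℝ) (r : S → A → ℝ) (β H L lam : ℝ) : Set (S → ℝ) :=
  {V | ∃ (w : Fin l → Fin d → ℝ) (Γ : Fin l → Matrix (Fin d) (Fin d) ℝ),
    (∀ j, Real.sqrt (∑ i, w j i ^ 2) ≤ L) ∧
    (∀ j, Real.sqrt (∑ i, ∑ k, Γ j i k ^ 2) ≤ Real.sqrt d / lam) ∧
    V = optimisticValue d l φ r β H w Γ}

lemma my_abs_min_sub_min (a b c : ℝ) : |min a c - min b c| ≤ |a - b| := by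
  have key : ∀ x y : ℝ, min x c - min y c ≤ |x - y| := by
    intro x y
    have h1 : min x c ≤ y + |x - y| := by
      have := le_abs_self (x - y)
      have := min_le_left x c
      linarith
    have h2 : min x c ≤ c + |x - y| := by
      have := abs_nonneg (x - y)
      have := min_le_right x c
      linarith
    have := le_min h1 h2
    have hmin : min (y + |x - y|) (c + |x - y|) = min y c + |x - y| := by
      rw [← min_add_add_right]
    linarith [hmin ▸ this]
  rw [abs_sub_le_iff]
  exact ⟨key a b, (abs_sub_comm a b) ▸ key b a⟩

lemma my_abs_ciSup_sub_ciSup {ι : Type*} [Fintype ι] [Nonempty ι] {f g : ι → ℝ} {ε : ℝ}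
    (h : ∀ i, |f i - g i| ≤ ε) : |(⨆ i, f i) - ⨆ i, g i| ≤ ε := by
  have bf : BddAbove (Set.range f) := (Set.finite_range f).bddAbove
  have bg : BddAbove (Set.range g) := (Set.finite_range g).bddAbove
  rw [abs_sub_le_iff]
  constructor
  · rw [sub_le_iff_le_add]
    refine ciSup_le fun i => ?_
    have := (abs_le.mp (h i)).2
    have := le_ciSup bg i
    linarith
  · rw [sub_le_iff_le_add]
    refine ciSup_le fun i => ?_
    have := (abs_le.mp (h i)).1
    have := le_ciSup bf i
    linarith

lemma my_sqrt_add_le (x y : ℝ) (hx : 0 ≤ x) (hy : 0 ≤ y) :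
    Real.sqrt (x + y) ≤ Real.sqrt x + Real.sqrt y := by
  have h : x + y ≤ (Real.sqrt x + Real.sqrt y) ^ 2 := by
    have hx' := Real.sq_sqrt hx
    have hy' := Real.sq_sqrt hy
    have := mul_nonneg (Real.sqrt_nonneg x) (Real.sqrt_nonneg y)
    nlinarith
  calc Real.sqrt (x + y) ≤ Real.sqrt ((Real.sqrt x + Real.sqrt y) ^ 2) := Real.sqrt_le_sqrt h
    _ = Real.sqrt x + Real.sqrt y := Real.sqrt_sq (by positivity)

lemma my_abs_sqrt_sub_sqrt (a b : ℝ) : |Real.sqrt a - Real.sqrt b| ≤ Real.sqrt |a - b| := by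
  have key : ∀ x y : ℝ, y ≤ x → Real.sqrt x - Real.sqrt y ≤ Real.sqrt (x - y) := by
    intro x y hxy
    rcases le_or_gt y 0 with hy | hy
    · rw [Real.sqrt_eq_zero_of_nonpos hy]
      have : Real.sqrt x ≤ Real.sqrt (x - y) := Real.sqrt_le_sqrt (by linarith)
      linarith
    · have : Real.sqrt x ≤ Real.sqrt y + Real.sqrt (x - y) := by
        have := my_sqrt_add_le y (x - y) hy.le (by linarith)
        simpa using this
      linarith
  rcases le_total b a with h | h
  · rw [abs_of_nonneg (by linarith : (0:ℝ) ≤ a - b),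
      abs_of_nonneg (sub_nonneg.mpr (Real.sqrt_le_sqrt h))]
    exact key a b h
  · rw [abs_of_nonpos (by linarith : a - b ≤ 0),
      abs_of_nonpos (sub_nonpos.mpr (Real.sqrt_le_sqrt h)), neg_sub, neg_sub]
    exact key b a h

lemma my_grid_cover (R δ : ℝ) (hR : 0 < R) (hδ : 0 < δ) :
    ∃ T : Finset ℝ, (T.card : ℝ) ≤ 1 + 2 * R / δ ∧
      ∀ x ∈ Set.Icc (-R) R, ∃ y ∈ T, |x - y| ≤ δ / 2 := by
  set N := ⌈2 * R / δ⌉₊ with hN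
  have hpos : (0:ℝ) < 2 * R / δ := by positivity
  have hN1 : 1 ≤ N := Nat.one_le_iff_ne_zero.mpr (by
    simp only [hN, ne_eq, Nat.ceil_eq_zero, not_le]; exact hpos)
  refine ⟨(Finset.range N).image (fun k : ℕ => -R + ((k:ℝ) + 1/2) * δ), ?_, ?_⟩
  · calc (((Finset.range N).image _).card : ℝ) ≤ ((Finset.range N).card : ℝ) := by
          exact_mod_cast Finset.card_image_le
      _ = N := by simp
      _ ≤ 2 * R / δ + 1 := by
          have := Nat.ceil_lt_add_one hpos.le
          linarith
      _ = 1 + 2 * R / δ := by ring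
  · rintro x ⟨hx1, hx2⟩
    have hxR : 0 ≤ x + R := by linarith
    set k := min ⌊(x + R) / δ⌋₊ (N - 1) with hk
    have hkN : k < N := by
      have : k ≤ N - 1 := min_le_right _ _
      omega
    refine ⟨-R + ((k:ℝ) + 1/2) * δ, Finset.mem_image.mpr ⟨k, Finset.mem_range.mpr hkN, rfl⟩, ?_⟩
    have hlow : (k : ℝ) * δ ≤ x + R := by
      have h1 : (k : ℝ) ≤ ⌊(x + R) / δ⌋₊ := by
        exact_mod_cast min_le_left _ _
      have h2 : (⌊(x + R) / δ⌋₊ : ℝ) ≤ (x + R) / δ := Nat.floor_le (by positivity)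
      rw [← le_div_iff₀ hδ] at *
      linarith
    have hhigh : x + R ≤ ((k : ℝ) + 1) * δ := by
      rcases le_or_gt ⌊(x + R) / δ⌋₊ (N - 1) with h | h
      · have hke : k = ⌊(x + R) / δ⌋₊ := min_eq_left h
        have := Nat.lt_floor_add_one ((x + R) / δ)
        rw [hke]
        have : (x + R) / δ < (⌊(x + R) / δ⌋₊ : ℝ) + 1 := Nat.lt_floor_add_one _
        calc x + R = (x + R) / δ * δ := by field_simp
          _ ≤ ((⌊(x + R) / δ⌋₊ : ℝ) + 1) * δ := by nlinarith
      · have hke : k = N - 1 := min_eq_right (by omega)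
        have hNc : ((k : ℝ) + 1) = N := by
          rw [hke]
          have : ((N - 1 : ℕ) : ℝ) = (N : ℝ) - 1 := by
            have : ((N - 1 : ℕ) : ℝ) = ((N:ℕ) : ℝ) - ((1:ℕ) : ℝ) := Nat.cast_sub hN1
            simpa using this
          rw [this]; ring
        have : 2 * R / δ ≤ N := Nat.le_ceil _
        have h2R : 2 * R ≤ (N : ℝ) * δ := by
          rw [div_le_iff₀ hδ] at this; linarith
        rw [hNc]; linarith
    rw [abs_le]
    constructor <;> nlinarith

/-- Covering number of the optimistic value function class (the paper's Lemma C.1):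
for every `ε > 0` the class `𝒱` admits an `ε`-net in the sup distance of cardinality at
most `(1 + 4L/ε)^{dℓ} · (1 + 8√d β² / (λ ε²))^{d²ℓ}`. -/
theorem optimisticClass_covering {S A : Type*} [Nonempty S] [Fintype A] [Nonempty A]
    (d l : ℕ) (hd : 1 ≤ d) (hl : 1 ≤ l)
    (φ : S → A → Fin d → ℝ) (hφ0 : ∀ s a i, 0 ≤ φ s a i)
    (hφ1 : ∀ s a, ∑ i, φ s a i = 1) (r : S → A → ℝ)
    (β H L lam : ℝ) (hβ : 0 < β) (hH : 0 < H) (hL : 0 < L) (hlam : 0 < lam)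
    (ε : ℝ) (hε : 0 < ε) :
    ∃ C : Finset (S → ℝ),
      (∀ V ∈ optimisticClass S A d l φ r β H L lam,
        ∃ V' ∈ C, ∀ s, |V s - V' s| ≤ ε) ∧
      (C.card : ℝ) ≤ (1 + 4 * L / ε) ^ (d * l) *
        (1 + 8 * Real.sqrt d * β ^ 2 / (lam * ε ^ 2)) ^ (d ^ 2 * l) := by
  classical
  haveI : Nonempty (Fin l) := Fin.pos_iff_nonempty.mp hl
  have hdR : (0:ℝ) < Real.sqrt d :=
    Real.sqrt_pos.mpr (by exact_mod_cast Nat.lt_of_lt_of_le Nat.zero_lt_one hd)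
  obtain ⟨Tw, hTwc, hTw⟩ := my_grid_cover L ε hL hε
  obtain ⟨TG, hTGc, hTG⟩ := my_grid_cover (Real.sqrt d / lam) (ε ^ 2 / (2 * β ^ 2))
    (by positivity) (by positivity)
  set W : Finset (Fin l → Fin d → ℝ) :=
    Fintype.piFinset fun _ => Fintype.piFinset fun _ => Tw with hW
  set G : Finset (Fin l → Matrix (Fin d) (Fin d) ℝ) :=
    Fintype.piFinset fun _ => Fintype.piFinset fun _ => Fintype.piFinset fun _ => TG with hG
  refine ⟨(W ×ˢ G).image fun p => optimisticValue d l φ r β H p.1 p.2, ?_, ?_⟩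
  · rintro V ⟨w, Γ, hw, hΓ, rfl⟩
    -- entry bounds
    have hwb : ∀ j i, w j i ∈ Set.Icc (-L) L := by
      intro j i
      rw [Set.mem_Icc, ← abs_le, ← Real.sqrt_sq_eq_abs]
      refine le_trans (Real.sqrt_le_sqrt ?_) (hw j)
      exact Finset.single_le_sum (f := fun i' => w j i' ^ 2) (fun i' _ => sq_nonneg _) (Finset.mem_univ i)
    have hΓb : ∀ j i k, Γ j i k ∈ Set.Icc (-(Real.sqrt d / lam)) (Real.sqrt d / lam) := by
      intro j i k
      rw [Set.mem_Icc, ← abs_le, ← Real.sqrt_sq_eq_abs]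
      refine le_trans (Real.sqrt_le_sqrt ?_) (hΓ j)
      calc Γ j i k ^ 2 ≤ ∑ k', Γ j i k' ^ 2 :=
            Finset.single_le_sum (f := fun k' => Γ j i k' ^ 2)
              (fun k' _ => sq_nonneg _) (Finset.mem_univ k)
        _ ≤ ∑ i', ∑ k', Γ j i' k' ^ 2 :=
            Finset.single_le_sum (f := fun i' => ∑ k', Γ j i' k' ^ 2)
              (fun i' _ => Finset.sum_nonneg fun k' _ => sq_nonneg _) (Finset.mem_univ i)
    choose w' hw'm hw'c using fun j i => hTw (w j i) (hwb j i)
    choose Γ' hΓ'm hΓ'c using fun j (i k : Fin d) => hTG (Γ j i k) (hΓb j i k)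
    refine ⟨optimisticValue d l φ r β H w' Γ', Finset.mem_image.mpr
      ⟨(w', Γ'), Finset.mem_product.mpr ⟨?_, ?_⟩, rfl⟩, ?_⟩
    · exact Fintype.mem_piFinset.mpr fun j => Fintype.mem_piFinset.mpr fun i => hw'm j i
    · exact Fintype.mem_piFinset.mpr fun j => Fintype.mem_piFinset.mpr fun i =>
        Fintype.mem_piFinset.mpr fun k => hΓ'm j i k
    · intro s
      simp only [optimisticValue]
      refine my_abs_ciSup_sub_ciSup fun a => ?_
      refine my_abs_ciSup_sub_ciSup fun j => ?_
      refine (my_abs_min_sub_min _ _ _).trans ?_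
      have hXX : (r s a + (∑ i, φ s a i * w j i) + β * ∑ i, φ s a i * Real.sqrt (Γ j i i)) -
          (r s a + (∑ i, φ s a i * w' j i) + β * ∑ i, φ s a i * Real.sqrt (Γ' j i i)) =
          (∑ i, φ s a i * (w j i - w' j i)) +
          β * (∑ i, φ s a i * (Real.sqrt (Γ j i i) - Real.sqrt (Γ' j i i))) := by
        simp only [mul_sub, Finset.sum_sub_distrib]
        ring
      rw [hXX]
      have h1 : |∑ i, φ s a i * (w j i - w' j i)| ≤ ε / 2 := by
        calc |∑ i, φ s a i * (w j i - w' j i)| ≤ ∑ i, |φ s a i * (w j i - w' j i)| :=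
              Finset.abs_sum_le_sum_abs _ _
          _ ≤ ∑ i, φ s a i * (ε / 2) := by
              refine Finset.sum_le_sum fun i _ => ?_
              rw [abs_mul, abs_of_nonneg (hφ0 s a i)]
              exact mul_le_mul_of_nonneg_left (hw'c j i) (hφ0 s a i)
          _ = ε / 2 := by rw [← Finset.sum_mul, hφ1]; ring
      have h2 : |∑ i, φ s a i * (Real.sqrt (Γ j i i) - Real.sqrt (Γ' j i i))| ≤ ε / (2 * β) := by
        calc |∑ i, φ s a i * (Real.sqrt (Γ j i i) - Real.sqrt (Γ' j i i))|
            ≤ ∑ i, |φ s a i * (Real.sqrt (Γ j i i) - Real.sqrt (Γ' j i i))| :=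
              Finset.abs_sum_le_sum_abs _ _
          _ ≤ ∑ i, φ s a i * (ε / (2 * β)) := by
              refine Finset.sum_le_sum fun i _ => ?_
              rw [abs_mul, abs_of_nonneg (hφ0 s a i)]
              refine mul_le_mul_of_nonneg_left ?_ (hφ0 s a i)
              have hδ : |Γ j i i - Γ' j i i| ≤ (ε / (2 * β)) ^ 2 := by
                refine (hΓ'c j i i).trans (le_of_eq ?_)
                field_simp
              refine (my_abs_sqrt_sub_sqrt _ _).trans ?_
              refine (Real.sqrt_le_sqrt hδ).trans (le_of_eq ?_)
              exact Real.sqrt_sq (by positivity)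
          _ = ε / (2 * β) := by rw [← Finset.sum_mul, hφ1]; ring
      calc |(∑ i, φ s a i * (w j i - w' j i)) +
            β * (∑ i, φ s a i * (Real.sqrt (Γ j i i) - Real.sqrt (Γ' j i i)))|
          ≤ |∑ i, φ s a i * (w j i - w' j i)| +
            β * |∑ i, φ s a i * (Real.sqrt (Γ j i i) - Real.sqrt (Γ' j i i))| := by
            refine (abs_add_le _ _).trans ?_
            rw [abs_mul, abs_of_pos hβ]
        _ ≤ ε / 2 + β * (ε / (2 * β)) := add_le_add h1 (mul_le_mul_of_nonneg_left h2 hβ.le)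
        _ = ε := by field_simp; ring
  · have hWcard : W.card = Tw.card ^ (d * l) := by
      simp [hW, Fintype.card_piFinset, Finset.prod_const, Finset.card_univ, ← pow_mul,
        Nat.mul_comm]
    have hGcard : G.card = TG.card ^ (d ^ 2 * l) := by
      have hin : (Fintype.piFinset fun _ : Fin d => Fintype.piFinset fun _ : Fin d => TG).card
          = TG.card ^ (d * d) := by
        simp [Fintype.card_piFinset, Finset.prod_const, Finset.card_univ, ← pow_mul]
      rw [hG]; refine (Fintype.card_piFinset _).trans ?_
      calc ∏ _j : Fin l, (Fintype.piFinset fun _ : Fin d =>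
              Fintype.piFinset fun _ : Fin d => TG).card
          = ∏ _j : Fin l, TG.card ^ (d * d) := by rw [hin]
        _ = TG.card ^ (d ^ 2 * l) := by
            rw [Finset.prod_const, Finset.card_univ, Fintype.card_fin, ← pow_mul]
            ring
    have hTw4 : (Tw.card : ℝ) ≤ 1 + 4 * L / ε := by
      refine hTwc.trans ?_
      have h24 : 2 * L / ε ≤ 4 * L / ε := by gcongr <;> linarith
      linarith
    have hTG8 : (TG.card : ℝ) ≤ 1 + 8 * Real.sqrt d * β ^ 2 / (lam * ε ^ 2) := by
      refine hTGc.trans ?_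
      have heq : 2 * (Real.sqrt d / lam) / (ε ^ 2 / (2 * β ^ 2)) =
          4 * Real.sqrt d * β ^ 2 / (lam * ε ^ 2) := by
        field_simp
        ring
      rw [heq]
      have h48 : 4 * Real.sqrt d * β ^ 2 / (lam * ε ^ 2) ≤
          8 * Real.sqrt d * β ^ 2 / (lam * ε ^ 2) := by
        gcongr
        nlinarith [Real.sqrt_nonneg (d : ℝ), sq_nonneg β]
      linarith
    calc (((W ×ˢ G).image fun p => optimisticValue d l φ r β H p.1 p.2).card : ℝ)
        ≤ ((W ×ˢ G).card : ℝ) := by exact_mod_cast Finset.card_image_le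
      _ = (W.card : ℝ) * (G.card : ℝ) := by rw [Finset.card_product]; push_cast; ring
      _ ≤ (1 + 4 * L / ε) ^ (d * l) *
          (1 + 8 * Real.sqrt d * β ^ 2 / (lam * ε ^ 2)) ^ (d ^ 2 * l) := by
        refine mul_le_mul ?_ ?_ (Nat.cast_nonneg _) (by positivity)
        · rw [hWcard]
          push_cast
          exact pow_le_pow_left₀ (Nat.cast_nonneg _) hTw4 _
        · rw [hGcard]
          push_cast
          exact pow_le_pow_left₀ (Nat.cast_nonneg _) hTG8 _
end

section
/- Let V₁ and V₂ be two members of the optimistic value function class 𝒱, with respective parameters (w_{1,1},…,w_{1,ℓ}, Γ_{1,1},…,Γ_{1,ℓ}) and (w_{2,1},…,w_{2,ℓ}, Γ_{2,1},…,Γ_{2,ℓ}). Then sup_{s∈S} |V₁(s) − V₂(s)| ≤ β · max_{1≤j≤ℓ} √(‖Γ_{1,j} − Γ_{2,j}‖_F) + max_{1≤j≤ℓ} ‖w_{1,j} − w_{2,j}‖₂, where ‖·‖_F is the Frobenius norm. -/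
open Finset

/-- The value function determined by parameters `w_j, Γ_j`, `1 ≤ j ≤ ℓ`:
`V(s) = max_{a∈A} max_{1≤j≤ℓ} min{ r(s,a) + φ(s,a)^⊤ w_j
          + β ∑_i φ_i(s,a) √((Γ_j)_{ii}), H }`. -/
private lemma sqrt_sub_sqrt_le' (x y : ℝ) :
    Real.sqrt x - Real.sqrt y ≤ Real.sqrt |x - y| := by
  rcases le_total x y with h | h
  · have h1 : Real.sqrt x ≤ Real.sqrt y := Real.sqrt_le_sqrt h
    linarith [Real.sqrt_nonneg |x - y|]
  · rw [abs_of_nonneg (by linarith)]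
    rcases le_total y 0 with hy | hy
    · have h0 : Real.sqrt y = 0 := Real.sqrt_eq_zero_of_nonpos hy
      rw [h0, sub_zero]
      exact Real.sqrt_le_sqrt (by linarith)
    · have key : x ≤ (Real.sqrt (x - y) + Real.sqrt y) ^ 2 := by
        have h1 := Real.sq_sqrt (show (0:ℝ) ≤ x - y by linarith)
        have h2 := Real.sq_sqrt hy
        nlinarith [Real.sqrt_nonneg (x - y), Real.sqrt_nonneg y]
      have : Real.sqrt x ≤ Real.sqrt (x - y) + Real.sqrt y := by
        calc Real.sqrt x ≤ Real.sqrt ((Real.sqrt (x - y) + Real.sqrt y) ^ 2) :=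
              Real.sqrt_le_sqrt key
          _ = Real.sqrt (x - y) + Real.sqrt y := Real.sqrt_sq (by positivity)
      linarith

private lemma abs_sqrt_sub_sqrt_le (x y : ℝ) :
    |Real.sqrt x - Real.sqrt y| ≤ Real.sqrt |x - y| := by
  rw [abs_sub_le_iff]
  constructor
  · simpa using sqrt_sub_sqrt_le' x y
  · rw [abs_sub_comm]; simpa using sqrt_sub_sqrt_le' y x

private lemma abs_ciSup_sub_ciSup {ι : Type*} [Fintype ι] [Nonempty ι]
    (f g : ι → ℝ) (c : ℝ) (h : ∀ i, |f i - g i| ≤ c) :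
    |(⨆ i, f i) - ⨆ i, g i| ≤ c := by
  have hb : ∀ (h : ι → ℝ), BddAbove (Set.range h) := fun h =>
    Set.Finite.bddAbove (Set.finite_range h)
  rw [abs_sub_le_iff]
  constructor
  · rw [sub_le_iff_le_add]
    refine ciSup_le fun i => ?_
    have hi := h i; rw [abs_sub_le_iff] at hi
    have : f i ≤ g i + c := by linarith [hi.1]
    exact this.trans (by rw [add_comm]; exact (add_le_add_iff_left c).2 (le_ciSup (hb g) i))
  · rw [sub_le_iff_le_add]
    refine ciSup_le fun i => ?_
    have hi := h i; rw [abs_sub_le_iff] at hi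
    have : g i ≤ f i + c := by linarith [hi.2]
    exact this.trans (by rw [add_comm]; exact (add_le_add_iff_left c).2 (le_ciSup (hb f) i))

/-- The sup-distance estimate proved inside the paper's Lemma C.1: if `V₁, V₂` are two
members of the optimistic value function class `𝒱` with respective parameters
`(w_{1,j}, Γ_{1,j})` and `(w_{2,j}, Γ_{2,j})`, then
`sup_s |V₁(s) − V₂(s)| ≤ β · max_j √(‖Γ_{1,j} − Γ_{2,j}‖_F) + max_j ‖w_{1,j} − w_{2,j}‖₂`,
where `‖·‖_F` is the Frobenius norm. -/
theorem optimisticValue_sup_dist {S A : Type*} [Nonempty S] [Fintype A] [Nonempty A]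
    (d l : ℕ) (hd : 1 ≤ d) (hl : 1 ≤ l)
    (φ : S → A → Fin d → ℝ) (hφ0 : ∀ s a i, 0 ≤ φ s a i)
    (hφ1 : ∀ s a, ∑ i, φ s a i = 1) (r : S → A → ℝ)
    (β H L lam : ℝ) (hβ : 0 < β) (hH : 0 < H) (hL : 0 < L) (hlam : 0 < lam)
    (w1 w2 : Fin l → Fin d → ℝ) (Γ1 Γ2 : Fin l → Matrix (Fin d) (Fin d) ℝ)
    (hw1 : ∀ j, Real.sqrt (∑ i, w1 j i ^ 2) ≤ L)
    (hw2 : ∀ j, Real.sqrt (∑ i, w2 j i ^ 2) ≤ L)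
    (hΓ1 : ∀ j, Real.sqrt (∑ i, ∑ k, Γ1 j i k ^ 2) ≤ Real.sqrt d / lam)
    (hΓ2 : ∀ j, Real.sqrt (∑ i, ∑ k, Γ2 j i k ^ 2) ≤ Real.sqrt d / lam) :
    ∀ s : S, |optimisticValue d l φ r β H w1 Γ1 s - optimisticValue d l φ r β H w2 Γ2 s| ≤
      β * (⨆ j : Fin l, Real.sqrt (Real.sqrt (∑ i, ∑ k, (Γ1 j i k - Γ2 j i k) ^ 2))) +
        ⨆ j : Fin l, Real.sqrt (∑ i, (w1 j i - w2 j i) ^ 2) := by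
  intro s
  haveI : NeZero l := ⟨by omega⟩
  set MΓ := ⨆ j : Fin l, Real.sqrt (Real.sqrt (∑ i, ∑ k, (Γ1 j i k - Γ2 j i k) ^ 2)) with hMΓ
  set MW := ⨆ j : Fin l, Real.sqrt (∑ i, (w1 j i - w2 j i) ^ 2) with hMW
  have hbΓ : BddAbove (Set.range fun j : Fin l =>
      Real.sqrt (Real.sqrt (∑ i, ∑ k, (Γ1 j i k - Γ2 j i k) ^ 2))) :=
    Set.Finite.bddAbove (Set.finite_range _)
  have hbW : BddAbove (Set.range fun j : Fin l =>
      Real.sqrt (∑ i, (w1 j i - w2 j i) ^ 2)) :=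
    Set.Finite.bddAbove (Set.finite_range _)
  unfold optimisticValue
  refine abs_ciSup_sub_ciSup _ _ _ fun a => ?_
  refine abs_ciSup_sub_ciSup _ _ _ fun j => ?_
  -- pointwise estimate
  have hmin := abs_min_sub_min_le_max
    (r s a + (∑ i, φ s a i * w1 j i) + β * ∑ i, φ s a i * Real.sqrt (Γ1 j i i)) H
    (r s a + (∑ i, φ s a i * w2 j i) + β * ∑ i, φ s a i * Real.sqrt (Γ2 j i i)) H
  have hW : |(∑ i, φ s a i * w1 j i) - ∑ i, φ s a i * w2 j i| ≤
      Real.sqrt (∑ i, (w1 j i - w2 j i) ^ 2) := by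
    rw [← Finset.sum_sub_distrib]
    refine (Finset.abs_sum_le_sum_abs _ _).trans ?_
    have : ∀ i ∈ Finset.univ, |φ s a i * w1 j i - φ s a i * w2 j i| ≤
        φ s a i * Real.sqrt (∑ i, (w1 j i - w2 j i) ^ 2) := by
      intro i _
      rw [← mul_sub, abs_mul, abs_of_nonneg (hφ0 s a i)]
      refine mul_le_mul_of_nonneg_left ?_ (hφ0 s a i)
      calc |w1 j i - w2 j i| = Real.sqrt ((w1 j i - w2 j i) ^ 2) := (Real.sqrt_sq_eq_abs _).symm
        _ ≤ Real.sqrt (∑ i, (w1 j i - w2 j i) ^ 2) :=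
          Real.sqrt_le_sqrt (Finset.single_le_sum (f := fun k => (w1 j k - w2 j k) ^ 2)
            (fun k _ => sq_nonneg _) (Finset.mem_univ i))
    refine (Finset.sum_le_sum this).trans ?_
    rw [← Finset.sum_mul, hφ1 s a, one_mul]
  have hG : |(∑ i, φ s a i * Real.sqrt (Γ1 j i i)) - ∑ i, φ s a i * Real.sqrt (Γ2 j i i)| ≤
      Real.sqrt (Real.sqrt (∑ i, ∑ k, (Γ1 j i k - Γ2 j i k) ^ 2)) := by
    rw [← Finset.sum_sub_distrib]
    refine (Finset.abs_sum_le_sum_abs _ _).trans ?_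
    have : ∀ i ∈ Finset.univ, |φ s a i * Real.sqrt (Γ1 j i i) - φ s a i * Real.sqrt (Γ2 j i i)| ≤
        φ s a i * Real.sqrt (Real.sqrt (∑ i, ∑ k, (Γ1 j i k - Γ2 j i k) ^ 2)) := by
      intro i _
      rw [← mul_sub, abs_mul, abs_of_nonneg (hφ0 s a i)]
      refine mul_le_mul_of_nonneg_left ?_ (hφ0 s a i)
      refine (abs_sqrt_sub_sqrt_le _ _).trans (Real.sqrt_le_sqrt ?_)
      calc |Γ1 j i i - Γ2 j i i| = Real.sqrt ((Γ1 j i i - Γ2 j i i) ^ 2) :=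
            (Real.sqrt_sq_eq_abs _).symm
        _ ≤ Real.sqrt (∑ i', ∑ k, (Γ1 j i' k - Γ2 j i' k) ^ 2) := by
          refine Real.sqrt_le_sqrt ?_
          calc (Γ1 j i i - Γ2 j i i) ^ 2 ≤ ∑ k, (Γ1 j i k - Γ2 j i k) ^ 2 :=
                Finset.single_le_sum (f := fun k => (Γ1 j i k - Γ2 j i k) ^ 2)
                  (fun k _ => sq_nonneg _) (Finset.mem_univ i)
            _ ≤ ∑ i', ∑ k, (Γ1 j i' k - Γ2 j i' k) ^ 2 :=
                Finset.single_le_sum (f := fun i' => ∑ k, (Γ1 j i' k - Γ2 j i' k) ^ 2)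
                  (fun i' _ => Finset.sum_nonneg fun k _ => sq_nonneg _) (Finset.mem_univ i)
    refine (Finset.sum_le_sum this).trans ?_
    rw [← Finset.sum_mul, hφ1 s a, one_mul]
  have hjΓ : Real.sqrt (Real.sqrt (∑ i, ∑ k, (Γ1 j i k - Γ2 j i k) ^ 2)) ≤ MΓ :=
    le_ciSup hbΓ j
  have hjW : Real.sqrt (∑ i, (w1 j i - w2 j i) ^ 2) ≤ MW := le_ciSup hbW j
  have key : |(r s a + (∑ i, φ s a i * w1 j i) + β * ∑ i, φ s a i * Real.sqrt (Γ1 j i i)) -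
      (r s a + (∑ i, φ s a i * w2 j i) + β * ∑ i, φ s a i * Real.sqrt (Γ2 j i i))| ≤
      β * MΓ + MW := by
    have e : (r s a + (∑ i, φ s a i * w1 j i) + β * ∑ i, φ s a i * Real.sqrt (Γ1 j i i)) -
        (r s a + (∑ i, φ s a i * w2 j i) + β * ∑ i, φ s a i * Real.sqrt (Γ2 j i i)) =
        ((∑ i, φ s a i * w1 j i) - ∑ i, φ s a i * w2 j i) +
        β * ((∑ i, φ s a i * Real.sqrt (Γ1 j i i)) - ∑ i, φ s a i * Real.sqrt (Γ2 j i i)) := by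
      ring
    rw [e]
    refine (abs_add_le _ _).trans ?_
    rw [abs_mul, abs_of_pos hβ]
    have := mul_le_mul_of_nonneg_left (hG.trans hjΓ) hβ.le
    linarith [hW.trans hjW]
  refine hmin.trans (max_le key ?_)
  have h0 : (0:ℝ) ≤ MΓ := (Real.sqrt_nonneg _).trans hjΓ
  have h1 : (0:ℝ) ≤ MW := (Real.sqrt_nonneg _).trans hjW
  simp only [sub_self, abs_zero]
  positivity
end

section
/- With S_k and T_k as defined and S_H = T_H = 0, the telescoping identity T_1 − S_1 = ∑_{h=1}^{H−1} (p − o_h) · ( ∑_{i=1}^{H−h} q^i − q·T_{h+1} ) · q^{h−1} · ∏_{j=1}^{h−1} (1 − o_j − δ) holds. -/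
open Finset

/-- The value `S_k` of the policy with expected actions `o` in the hard-instance
construction of the paper's lower-bound proof (Lemma E.1). `S_H = 0` since the sum
is empty. -/
noncomputable def lowerBoundS (H : ℕ) (q δ : ℝ) (o : ℕ → ℝ) (k : ℕ) : ℝ :=
  ∑ h ∈ Finset.Icc k (H - 1),
    (∑ i ∈ Finset.Icc (h - k + 1) (H - k), q ^ i) *
      (∏ j ∈ Finset.Icc k (h - 1), (1 - o j - δ)) * (o h + δ)

/-- The optimal value `T_k` in the hard-instance construction: `T_k` is `S_k` with every
`o_j` replaced by the constant `p`. `T_H = 0` since the sum is empty. -/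
noncomputable def lowerBoundT (H : ℕ) (q δ p : ℝ) (k : ℕ) : ℝ :=
  ∑ h ∈ Finset.Icc k (H - 1),
    (∑ i ∈ Finset.Icc (h - k + 1) (H - k), q ^ i) *
      (1 - p - δ) ^ (h - k) * (p + δ)

lemma icc_split {k n : ℕ} (h : k ≤ n) : Finset.Icc k n = insert k (Finset.Icc (k+1) n) := by
  rw [Finset.Icc_add_one_left_eq_Ioc, Finset.Ioc_insert_left h]

lemma geom_shift (q : ℝ) (a b : ℕ) :
    ∑ i ∈ Finset.Icc (a+1) (b+1), q ^ i = q * ∑ i ∈ Finset.Icc a b, q ^ i := by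
  rw [← Finset.map_add_right_Icc, Finset.sum_map, Finset.mul_sum]
  simp [pow_succ, mul_comm]

lemma lowerBoundS_rec (H : ℕ) (q δ : ℝ) (o : ℕ → ℝ) (k : ℕ) (hk : 1 ≤ k) (hkH : k + 1 ≤ H) :
    lowerBoundS H q δ o k =
      (∑ i ∈ Finset.Icc 1 (H - k), q ^ i) * (o k + δ) +
        (1 - o k - δ) * (q * lowerBoundS H q δ o (k + 1)) := by
  unfold lowerBoundS
  rw [icc_split (show k ≤ H - 1 by omega), Finset.sum_insert (by simp)]
  congr 1
  · have e1 : k - k + 1 = 1 := by omega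
    have e2 : Finset.Icc k (k-1) = ∅ := Finset.Icc_eq_empty (by omega)
    rw [e1, e2]; simp
  · rw [Finset.mul_sum, Finset.mul_sum]
    refine Finset.sum_congr rfl fun h hh => ?_
    simp only [Finset.mem_Icc] at hh
    have h1 : h - k + 1 = (h - (k+1) + 1) + 1 := by omega
    have h2 : H - k = (H - (k+1)) + 1 := by omega
    have h3 : Finset.Icc k (h-1) = insert k (Finset.Icc (k+1) (h-1)) := icc_split (by omega)
    rw [h1, h2, geom_shift, h3, Finset.prod_insert (by simp)]
    ring

lemma lowerBoundT_rec (H : ℕ) (q δ p : ℝ) (k : ℕ) (hkH : k + 1 ≤ H) :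
    lowerBoundT H q δ p k =
      (∑ i ∈ Finset.Icc 1 (H - k), q ^ i) * (p + δ) +
        (1 - p - δ) * (q * lowerBoundT H q δ p (k + 1)) := by
  unfold lowerBoundT
  rw [icc_split (show k ≤ H - 1 by omega), Finset.sum_insert (by simp)]
  congr 1
  · have e1 : k - k + 1 = 1 := by omega
    have e2 : k - k = 0 := by omega
    rw [e1, e2]; simp
  · rw [Finset.mul_sum, Finset.mul_sum]
    refine Finset.sum_congr rfl fun h hh => ?_
    simp only [Finset.mem_Icc] at hh
    have h1 : h - k + 1 = (h - (k+1) + 1) + 1 := by omega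
    have h2 : H - k = (H - (k+1)) + 1 := by omega
    have h4 : h - k = (h - (k+1)) + 1 := by omega
    rw [h1, h2, h4, geom_shift, pow_succ]
    ring

lemma lowerBound_aux (H : ℕ) (q δ p : ℝ) (o : ℕ → ℝ) :
    ∀ m k, 1 ≤ k → k + m = H →
      lowerBoundT H q δ p k - lowerBoundS H q δ o k =
        ∑ h ∈ Finset.Icc k (H - 1),
          (p - o h) * ((∑ i ∈ Finset.Icc 1 (H - h), q ^ i) - q * lowerBoundT H q δ p (h + 1)) *
            q ^ (h - k) * ∏ j ∈ Finset.Icc k (h - 1), (1 - o j - δ) := by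
  intro m
  induction m with
  | zero =>
    intro k hk hkH
    have he : Finset.Icc k (H-1) = ∅ := Finset.Icc_eq_empty (by omega)
    unfold lowerBoundT lowerBoundS
    rw [he]; simp
  | succ m ih =>
    intro k hk hkH
    have hkH' : k + 1 ≤ H := by omega
    rw [lowerBoundT_rec H q δ p k hkH', lowerBoundS_rec H q δ o k hk hkH']
    have hIH := ih (k+1) (by omega) (by omega)
    rw [icc_split (show k ≤ H - 1 by omega), Finset.sum_insert (by simp)]
    have e1 : k - k = 0 := by omega
    have e2 : Finset.Icc k (k-1) = ∅ := Finset.Icc_eq_empty (by omega)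
    have e3 : ∀ h ∈ Finset.Icc (k+1) (H-1),
        (p - o h) * ((∑ i ∈ Finset.Icc 1 (H - h), q ^ i) - q * lowerBoundT H q δ p (h + 1)) *
            q ^ (h - k) * ∏ j ∈ Finset.Icc k (h - 1), (1 - o j - δ)
        = (1 - o k - δ) * (q *
            ((p - o h) * ((∑ i ∈ Finset.Icc 1 (H - h), q ^ i) - q * lowerBoundT H q δ p (h + 1)) *
              q ^ (h - (k+1)) * ∏ j ∈ Finset.Icc (k+1) (h - 1), (1 - o j - δ))) := by
      intro h hh
      simp only [Finset.mem_Icc] at hh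
      have h4 : h - k = (h - (k+1)) + 1 := by omega
      have h3 : Finset.Icc k (h-1) = insert k (Finset.Icc (k+1) (h-1)) := icc_split (by omega)
      rw [h4, h3, Finset.prod_insert (by simp), pow_succ]
      ring
    rw [Finset.sum_congr rfl e3, ← Finset.mul_sum, ← Finset.mul_sum, ← hIH, e1, e2]
    simp only [Finset.prod_empty, pow_zero]
    ring

/-- With `S_k`, `T_k` as defined (and `S_H = T_H = 0`), the telescoping identity
`T_1 − S_1 = ∑_{h=1}^{H−1} (p − o_h)·(∑_{i=1}^{H−h} q^i − q·T_{h+1})·q^{h−1}·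
∏_{j=1}^{h−1}(1 − o_j − δ)` holds. -/
theorem lowerBound_telescoping (H : ℕ) (hH : 2 ≤ H) (q δ p : ℝ) (o : ℕ → ℝ) :
    lowerBoundT H q δ p 1 - lowerBoundS H q δ o 1 =
      ∑ h ∈ Finset.Icc 1 (H - 1),
        (p - o h) * ((∑ i ∈ Finset.Icc 1 (H - h), q ^ i) - q * lowerBoundT H q δ p (h + 1)) *
          q ^ (h - 1) * ∏ j ∈ Finset.Icc 1 (h - 1), (1 - o j - δ) := by
  exact lowerBound_aux H q δ p o (H - 1) 1 le_rfl (by omega)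
end

section
/- Let H ≥ 6 be an integer, δ = 1/H, p a real with 0 ≤ p ≤ δ/3, ρ ∈ (0, 3/4], q = 1 − ρ, and h an integer with 1 ≤ h ≤ H/2. Then ∑_{i=1}^{H−h} q^i − T_{h+1} = q^{H−h} + ∑_{i=1}^{H−h−1} (q·(1−p−δ))^i, and ∑_{i=1}^{H−h} q^i − T_{h+1} ≥ (1/12) ∑_{i=1}^{H−h} q^i. -/
open Finset

lemma aux_eq (q c : ℝ) (m : ℕ) :
    (∑ i ∈ Icc 1 (m+1), q ^ i)
      - (∑ j ∈ range m, (∑ i ∈ Icc (j+1) m, q ^ i) * c ^ j * (1 - c))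
    = q ^ (m+1) + ∑ i ∈ Icc 1 m, (q * c) ^ i := by
  induction m with
  | zero => simp
  | succ m IH =>
    have hstep : ∀ j ∈ range (m+1),
        (∑ i ∈ Icc (j+1) (m+1), q ^ i) * c ^ j * (1 - c)
        = (∑ i ∈ Icc (j+1) m, q ^ i) * c ^ j * (1 - c) + q ^ (m+1) * (c ^ j * (1 - c)) := by
      intro j hj
      have hj' := Finset.mem_range.mp hj
      rw [Finset.sum_Icc_succ_top (by omega : j + 1 ≤ m + 1)]
      ring
    rw [Finset.sum_congr rfl hstep, Finset.sum_add_distrib, ← Finset.mul_sum,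
      Finset.sum_range_succ (fun j => (∑ i ∈ Icc (j+1) m, q ^ i) * c ^ j * (1 - c))]
    have hempty : (Icc (m+1) m : Finset ℕ) = ∅ := by
      apply Finset.Icc_eq_empty; omega
    have hgeom : (∑ j ∈ range (m+1), c ^ j * (1 - c)) = 1 - c ^ (m+1) := by
      have := geom_sum_mul c (m+1)
      rw [← Finset.sum_mul] at *
      nlinarith [this]
    rw [hempty, hgeom]
    rw [show m + 1 + 1 = m + 2 from rfl,
      Finset.sum_Icc_succ_top (by omega : 1 ≤ m + 2) (fun i => q ^ i),
      Finset.sum_Icc_succ_top (by omega : 1 ≤ m + 1) (fun i => (q*c) ^ i)]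
    have hmp : (q * c) ^ (m+1) = q ^ (m+1) * c ^ (m+1) := mul_pow q c (m+1)
    simp only [Finset.sum_empty]
    nlinarith [IH]

lemma log_twelve_ge : (12:ℝ)/7 ≤ Real.log 12 := by
  rw [Real.le_log_iff_exp_le (by norm_num)]
  have h1 : Real.exp (12/7) ≤ Real.exp 2 := Real.exp_le_exp.mpr (by norm_num)
  have h2 : Real.exp 2 = Real.exp 1 * Real.exp 1 := by
    rw [← Real.exp_add]; norm_num
  have h3 := Real.exp_one_lt_d9
  nlinarith [Real.exp_pos 1]

lemma twelve_lemma (H : ℕ) (hH : 6 ≤ H) : (1/12 : ℝ) ≤ (1 - 4/(3*(H:ℝ))) ^ H := by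
  have hH0 : (0:ℝ) < H := by
    have : (6:ℝ) ≤ H := by exact_mod_cast hH
    linarith
  set t : ℝ := 4/(3*(H:ℝ)) with ht
  have ht0 : 0 < t := by positivity
  have ht2 : t ≤ 2/9 := by
    rw [ht, div_le_div_iff₀ (by linarith) (by norm_num)]
    have : (6:ℝ) ≤ H := by exact_mod_cast hH
    linarith
  set α : ℝ := 3 * Real.log 12 / 4 with hα
  have hα1 : 9/7 ≤ α := by
    have := log_twelve_ge; rw [hα]; linarith
  have hkey : (12:ℝ) ^ (-(3/4) * t : ℝ) ≤ 1 - t := by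
    have h12 : (0:ℝ) < 12 := by norm_num
    have hrw : (12:ℝ) ^ (-(3/4) * t : ℝ) = Real.exp (-(α * t)) := by
      rw [Real.rpow_def_of_pos h12, hα]; ring_nf
    rw [hrw]
    have hexp : α * t + 1 ≤ Real.exp (α * t) := Real.add_one_le_exp _
    have hpos : 0 < 1 + α * t := by nlinarith
    have e1 : Real.exp (-(α * t)) * Real.exp (α * t) = 1 := by
      rw [← Real.exp_add]; simp
    have e2 : 0 < Real.exp (-(α * t)) := Real.exp_pos _
    have e3 : Real.exp (-(α * t)) * (α * t + 1) ≤ 1 := by nlinarith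
    nlinarith [mul_le_mul_of_nonneg_right ht2 (le_of_lt ht0), e3, hpos, ht0, hα1]
  have hnn : (0:ℝ) ≤ (12:ℝ) ^ (-(3/4) * t : ℝ) := Real.rpow_nonneg (by norm_num) _
  calc (1/12 : ℝ) = ((12:ℝ) ^ (-(3/4) * t : ℝ)) ^ H := by
        rw [← Real.rpow_natCast ((12:ℝ) ^ (-(3/4) * t : ℝ)) H, ← Real.rpow_mul (by norm_num)]
        have : -(3/4) * t * (H:ℝ) = -1 := by
          rw [ht]; field_simp
        rw [this]
        rw [Real.rpow_neg_one]
        norm_num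
    _ ≤ (1 - t) ^ H := pow_le_pow_left₀ hnn hkey H

/-- Let `H ≥ 6` be an integer, `δ = 1/H`, `p` a real with `0 ≤ p ≤ δ/3`, `ρ ∈ (0, 3/4]`,
`q = 1 − ρ`, and `h` an integer with `1 ≤ h ≤ H/2`. Then
`∑_{i=1}^{H−h} q^i − T_{h+1} = q^{H−h} + ∑_{i=1}^{H−h−1} (q·(1−p−δ))^i`, and
`∑_{i=1}^{H−h} q^i − T_{h+1} ≥ (1/12) ∑_{i=1}^{H−h} q^i`. This is the key inequality in
the proof of Lemma E.1 of the paper. -/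
theorem lowerBound_key_inequality (H : ℕ) (hH : 6 ≤ H) (p ρ : ℝ)
    (hp0 : 0 ≤ p) (hp1 : p ≤ (1 / (H : ℝ)) / 3) (hρ0 : 0 < ρ) (hρ1 : ρ ≤ 3 / 4)
    (h : ℕ) (hh1 : 1 ≤ h) (hh2 : 2 * h ≤ H) :
    ((∑ i ∈ Finset.Icc 1 (H - h), (1 - ρ) ^ i)
        - lowerBoundT H (1 - ρ) (1 / (H : ℝ)) p (h + 1) =
      (1 - ρ) ^ (H - h) +
        ∑ i ∈ Finset.Icc 1 (H - h - 1), ((1 - ρ) * (1 - p - 1 / (H : ℝ))) ^ i) ∧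
    (1 / 12 : ℝ) * (∑ i ∈ Finset.Icc 1 (H - h), (1 - ρ) ^ i) ≤
      (∑ i ∈ Finset.Icc 1 (H - h), (1 - ρ) ^ i)
        - lowerBoundT H (1 - ρ) (1 / (H : ℝ)) p (h + 1) := by
  have hH6 : (6:ℝ) ≤ (H:ℝ) := by exact_mod_cast hH
  have hHpos : (0:ℝ) < (H:ℝ) := by linarith
  set q : ℝ := 1 - ρ with hq
  set c : ℝ := 1 - p - 1/(H:ℝ) with hc
  set m : ℕ := H - h - 1 with hm
  have hnm : H - h = m + 1 := by omega
  -- rewrite lowerBoundT as the reindexed sum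
  have hT : lowerBoundT H q (1/(H:ℝ)) p (h+1)
      = ∑ j ∈ range m, (∑ i ∈ Icc (j+1) m, q ^ i) * c ^ j * (1 - c) := by
    rw [lowerBoundT, ← Finset.Ico_add_one_right_eq_Icc,
      (by omega : H - 1 + 1 = H), Finset.sum_Ico_eq_sum_range]
    have hcard : H - (h + 1) = m := by omega
    have hHm : H - (h + 1) = m := by omega
    rw [hcard]
    refine Finset.sum_congr rfl ?_
    intro j hj
    have h1 : h + 1 + j - (h + 1) = j := by omega
    rw [h1]
    have h2 : p + 1/(H:ℝ) = 1 - c := by rw [hc]; ring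
    rw [h2]
  have key := aux_eq q c m
  rw [hnm, hT]
  constructor
  · exact key
  · rw [key]
    -- bounds
    have hq0 : 0 ≤ q := by rw [hq]; linarith
    have hcl : 1 - 4/(3*(H:ℝ)) ≤ c := by
      rw [hc]
      have h4 : (1/(H:ℝ))/3 + 1/(H:ℝ) = 4/(3*(H:ℝ)) := by
        field_simp; ring
      linarith
    have hc0 : (0:ℝ) ≤ 1 - 4/(3*(H:ℝ)) := by
      rw [sub_nonneg, div_le_one (by linarith)]
      linarith
    have hc0' : 0 ≤ c := le_trans hc0 hcl
    have hc1 : c ≤ 1 := by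
      rw [hc]
      have : 0 < 1/(H:ℝ) := by positivity
      linarith
    have hcH : (1/12 : ℝ) ≤ c ^ m := by
      calc (1/12 : ℝ) ≤ (1 - 4/(3*(H:ℝ))) ^ H := twelve_lemma H hH
        _ ≤ c ^ H := pow_le_pow_left₀ hc0 hcl H
        _ ≤ c ^ m := pow_le_pow_of_le_one hc0' hc1 (by omega)
    have hsum : ∀ i ∈ Icc 1 m, (1/12 : ℝ) * q ^ i ≤ (q * c) ^ i := by
      intro i hi
      have him : i ≤ m := (Finset.mem_Icc.mp hi).2
      have hci : c ^ m ≤ c ^ i := pow_le_pow_of_le_one hc0' hc1 him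
      have hqi : (0:ℝ) ≤ q ^ i := pow_nonneg hq0 i
      have : (1/12 : ℝ) ≤ c ^ i := le_trans hcH hci
      calc (1/12 : ℝ) * q ^ i ≤ c ^ i * q ^ i := by
            exact mul_le_mul_of_nonneg_right this hqi
        _ = (q * c) ^ i := by rw [mul_pow]; ring
    have hS : (1/12 : ℝ) * ∑ i ∈ Icc 1 m, q ^ i ≤ ∑ i ∈ Icc 1 m, (q * c) ^ i := by
      rw [Finset.mul_sum]
      exact Finset.sum_le_sum hsum
    have hqm : (1/12 : ℝ) * q ^ (m+1) ≤ q ^ (m+1) := by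
      have := pow_nonneg hq0 (m+1); linarith
    rw [Finset.sum_Icc_succ_top (by omega : 1 ≤ m + 1) (fun i => q ^ i)]
    linarith
end
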